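/- arXiv:1512.02376 — 3 statements merged into one kernel-verified Lean document; each statement's English description precedes it below -/
import Mathlib

section
/- The ideal of R generated by the set 𝒢_{D_{2m}} equals the toric ideal I_{D_{2m}} = ker π. -/
open MvPolynomial

/-- Index type for the variables of the polynomial ring `R` in the `D_{2m}` case (`n = 2m`).
The set `J = {3,5,…,n-1}` of odd integers is realised as `{2t+3 | t : Fin (m-1)}` and
`J^c = {2,4,…,n-2}` as `{2t+2 | t : Fin (m-1)}`.  The constructors are:
`x1 ↦ x_1`, `xn ↦ x_n`, `xJ t ↦ x_{2t+3}` (`2t+3 ∈ J`), `xJc t ↦ x_{2t+2}` (`2t+2 ∈ J^c`),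
`xP s t _ ↦ x_{2s+3,2t+3}` (a pair `k < ℓ` in `J`), `y t ↦ y_{2t+3}`. -/
inductive DVar (m : ℕ) : Type where
  | x1 : DVar m
  | xn : DVar m
  | xJ : Fin (m - 1) → DVar m
  | xJc : Fin (m - 1) → DVar m
  | xP : (s t : Fin (m - 1)) → s < t → DVar m
  | y : Fin (m - 1) → DVar m

/-- The images of the variables under `π`, where `u_i = X i` inside
`K[u_1,…,u_n] ⊆ MvPolynomial ℕ K`:
`π(x_1) = u_1²`, `π(x_n) = u_n²` (`n = 2m`), `π(x_i) = u_i²` for `i ∈ J`,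
`π(x_j) = u_j` for `j ∈ J^c`, `π(x_{k,ℓ}) = u_k u_ℓ` for `k < ℓ` in `J`, and
`π(y_i) = u_i u_1 u_n` for `i ∈ J`. -/
noncomputable def dImage (K : Type*) [Field K] (m : ℕ) : DVar m → MvPolynomial ℕ K
  | .x1 => X 1 ^ 2
  | .xn => X (2 * m) ^ 2
  | .xJ t => X (2 * t.val + 3) ^ 2
  | .xJc t => X (2 * t.val + 2)
  | .xP s t _ => X (2 * s.val + 3) * X (2 * t.val + 3)
  | .y t => X (2 * t.val + 3) * X 1 * X (2 * m)

/-- The toric map `π : R → K[u_1,…,u_n]` for the `D_{2m}` configuration. -/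
noncomputable def piD (K : Type*) [Field K] (m : ℕ) :
    MvPolynomial (DVar m) K →ₐ[K] MvPolynomial ℕ K :=
  aeval (dImage K m)

/-- The set `𝒢_{D_{2m}}` of binomials. -/
noncomputable def GD (K : Type*) [Field K] (m : ℕ) : Set (MvPolynomial (DVar m) K) :=
  {g | (∃ (i j k l : Fin (m - 1)) (hij : i < j) (hjk : j < k) (hkl : k < l),
          g = X (DVar.xP i k (hij.trans hjk)) * X (DVar.xP j l (hjk.trans hkl))
              - X (DVar.xP i j hij) * X (DVar.xP k l hkl) ∨
          g = X (DVar.xP i l (hij.trans (hjk.trans hkl))) * X (DVar.xP j k hjk)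
              - X (DVar.xP i j hij) * X (DVar.xP k l hkl)) ∨
      (∃ (i j k : Fin (m - 1)) (hij : i < j) (hjk : j < k),
          g = X (DVar.xP i j hij) * X (DVar.xP i k (hij.trans hjk))
              - X (DVar.xJ i) * X (DVar.xP j k hjk) ∨
          g = X (DVar.xJ j) * X (DVar.xP i k (hij.trans hjk))
              - X (DVar.xP i j hij) * X (DVar.xP j k hjk) ∨
          g = X (DVar.xJ k) * X (DVar.xP i j hij)
              - X (DVar.xP i k (hij.trans hjk)) * X (DVar.xP j k hjk) ∨
          g = X (DVar.xP j k hjk) * X (DVar.y i)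
              - X (DVar.xP i j hij) * X (DVar.y k) ∨
          g = X (DVar.xP i k (hij.trans hjk)) * X (DVar.y j)
              - X (DVar.xP i j hij) * X (DVar.y k)) ∨
      (∃ (i j : Fin (m - 1)) (hij : i < j),
          g = X (DVar.xJ i) * X (DVar.xJ j) - X (DVar.xP i j hij) ^ 2 ∨
          g = X (DVar.xJ j) * X (DVar.y i) - X (DVar.xP i j hij) * X (DVar.y j) ∨
          g = X (DVar.xP i j hij) * X (DVar.y i) - X (DVar.xJ i) * X (DVar.y j) ∨
          g = X (DVar.xP i j hij) * X DVar.x1 * X DVar.xn - X (DVar.y i) * X (DVar.y j)) ∨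
      (∃ i : Fin (m - 1),
          g = X (DVar.xJ i) * X DVar.x1 * X DVar.xn - X (DVar.y i) ^ 2)}

namespace DP
open Finsupp
variable {m : ℕ}

abbrev Exp (m : ℕ) := DVar m →₀ ℕ

@[simp] lemma xP_eq_iff {s t s' t' : Fin (m-1)} {h : s < t} {h' : s' < t'} :
    (DVar.xP s t h = DVar.xP s' t' h') ↔ (s = s' ∧ t = t') := by
  constructor
  · intro he; cases he; exact ⟨rfl, rfl⟩
  · rintro ⟨rfl, rfl⟩; rfl

private def code {m : ℕ} : DVar m → ℕ × ℕ × ℕ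
  | .x1 => (6,1,1)
  | .xn => (1,0,0)
  | .xJ t => (2,t.val,0)
  | .xJc t => (3,t.val,0)
  | .xP s t _ => (4,s.val,t.val)
  | .y t => (5,t.val,0)

private lemma code_inj {m : ℕ} (a b : DVar m) (h : code a = code b) : a = b := by
  cases a <;> cases b <;> simp_all [code, Prod.ext_iff, Fin.val_inj]

instance : DecidableEq (DVar m) := fun a b =>
  decidable_of_iff (code a = code b) ⟨code_inj a b, fun h => h ▸ rfl⟩

/-- exponent vector of the image of a variable -/
noncomputable def wt (m : ℕ) : DVar m → (ℕ →₀ ℕ)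
  | .x1 => single 1 2
  | .xn => single (2*m) 2
  | .xJ t => single (2*t.val+3) 2
  | .xJc t => single (2*t.val+2) 1
  | .xP s t _ => single (2*s.val+3) 1 + single (2*t.val+3) 1
  | .y t => single (2*t.val+3) 1 + (single 1 1 + single (2*m) 1)

noncomputable def Dd (σ : Exp m) : ℕ := ∑ t, σ (.y t)

noncomputable def Cc (σ : Exp m) (t : Fin (m-1)) : ℕ :=
  (∑ s, if h : s < t then σ (.xP s t h) else 0)
  + (∑ u, if h : t < u then σ (.xP t u h) else 0)

noncomputable def fo (σ : Exp m) (t : Fin (m-1)) : ℕ := 2 * σ (.xJ t) + Cc σ t + σ (.y t)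

noncomputable def τ (σ : Exp m) : ℕ →₀ ℕ :=
  single 1 (2 * σ .x1 + Dd σ) + single (2*m) (2 * σ .xn + Dd σ)
  + ∑ t, single (2*t.val+2) (σ (.xJc t)) + ∑ t, single (2*t.val+3) (fo σ t)

lemma Dd_add (σ ρ : Exp m) : Dd (σ + ρ) = Dd σ + Dd ρ := by
  simp [Dd, Finset.sum_add_distrib]

lemma Cc_add (σ ρ : Exp m) (t : Fin (m-1)) : Cc (σ + ρ) t = Cc σ t + Cc ρ t := by
  simp only [Cc, Finsupp.add_apply]
  rw [← Finset.sum_add_distrib, ← Finset.sum_add_distrib]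
  have h1 : ∀ s : Fin (m-1), (if h : s < t then σ (.xP s t h) + ρ (.xP s t h) else 0)
      = (if h : s < t then σ (.xP s t h) else 0) + (if h : s < t then ρ (.xP s t h) else 0) := by
    intro s; by_cases h : s < t <;> simp [h]
  have h2 : ∀ u : Fin (m-1), (if h : t < u then σ (.xP t u h) + ρ (.xP t u h) else 0)
      = (if h : t < u then σ (.xP t u h) else 0) + (if h : t < u then ρ (.xP t u h) else 0) := by
    intro u; by_cases h : t < u <;> simp [h]
  simp only [h1, h2]
  rw [← Finset.sum_add_distrib, ← Finset.sum_add_distrib]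
  congr 1; ext s; ring

lemma fo_add (σ ρ : Exp m) (t : Fin (m-1)) : fo (σ + ρ) t = fo σ t + fo ρ t := by
  simp [fo, Cc_add]; ring

lemma τ_add (σ ρ : Exp m) : τ (σ + ρ) = τ σ + τ ρ := by
  simp only [τ, Dd_add, fo_add, Finsupp.add_apply]
  have e1 : single 1 (2 * (σ .x1 + ρ .x1) + (Dd σ + Dd ρ))
      = single 1 (2 * σ .x1 + Dd σ) + single 1 (2 * ρ .x1 + Dd ρ) := by
    rw [← Finsupp.single_add]; ring_nf
  have e2 : single (2*m) (2 * (σ .xn + ρ .xn) + (Dd σ + Dd ρ))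
      = single (2*m) (2 * σ .xn + Dd σ) + single (2*m) (2 * ρ .xn + Dd ρ) := by
    rw [← Finsupp.single_add]; ring_nf
  rw [e1, e2]
  simp only [Finsupp.single_add, Finset.sum_add_distrib]
  abel

lemma τ_zero : τ (0 : Exp m) = 0 := by
  simp [τ, Dd, Cc, fo]

end DP
namespace DP
variable {m : ℕ}
open Finsupp

lemma τ_apply (σ : Exp m) (j : ℕ) :
    τ σ j = (single 1 (2 * σ .x1 + Dd σ) : ℕ →₀ ℕ) j + single (2*m) (2 * σ .xn + Dd σ) j
      + ∑ t, (single (2*t.val+2) (σ (.xJc t)) : ℕ →₀ ℕ) j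
      + ∑ t, (single (2*t.val+3) (fo σ t) : ℕ →₀ ℕ) j := by
  simp [τ, Finsupp.finset_sum_apply]

lemma τ_apply_one (σ : Exp m) : τ σ 1 = 2 * σ .x1 + Dd σ := by
  rw [τ_apply]
  rw [Finsupp.single_eq_same]
  rw [Finsupp.single_eq_of_ne (by omega)]
  rw [Finset.sum_eq_zero (fun t _ => Finsupp.single_eq_of_ne (by omega)),
      Finset.sum_eq_zero (fun t _ => Finsupp.single_eq_of_ne (by omega))]
  omega

lemma τ_apply_n (σ : Exp m) : τ σ (2*m) = 2 * σ .xn + Dd σ := by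
  rw [τ_apply]
  rw [Finsupp.single_eq_same]
  rw [Finsupp.single_eq_of_ne (by omega)]
  rw [Finset.sum_eq_zero (fun t _ => Finsupp.single_eq_of_ne (by have := t.isLt; omega)),
      Finset.sum_eq_zero (fun t _ => Finsupp.single_eq_of_ne (by have := t.isLt; omega))]
  omega

lemma τ_apply_even (σ : Exp m) (t₀ : Fin (m-1)) : τ σ (2*t₀.val+2) = σ (.xJc t₀) := by
  have ht₀ := t₀.isLt
  rw [τ_apply]
  rw [Finsupp.single_eq_of_ne (by omega), Finsupp.single_eq_of_ne (by have := t₀.isLt; omega)]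
  rw [Finset.sum_eq_single t₀ (fun t _ ht => Finsupp.single_eq_of_ne
        (by have : t.val ≠ t₀.val := fun h => ht (Fin.ext h); omega))
      (fun h => absurd (Finset.mem_univ t₀) h)]
  rw [Finset.sum_eq_zero (fun t _ => Finsupp.single_eq_of_ne (by omega))]
  rw [Finsupp.single_eq_same]; omega

lemma τ_apply_odd (σ : Exp m) (t₀ : Fin (m-1)) : τ σ (2*t₀.val+3) = fo σ t₀ := by
  have ht₀ := t₀.isLt
  rw [τ_apply]
  rw [Finsupp.single_eq_of_ne (by omega), Finsupp.single_eq_of_ne (by omega)]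
  rw [Finset.sum_eq_zero (fun t _ => Finsupp.single_eq_of_ne (by omega))]
  rw [Finset.sum_eq_single t₀ (fun t _ ht => Finsupp.single_eq_of_ne
        (by have : t.val ≠ t₀.val := fun h => ht (Fin.ext h); omega))
      (fun h => absurd (Finset.mem_univ t₀) h)]
  rw [Finsupp.single_eq_same]; omega

end DP
namespace DP
variable {m : ℕ}
open Finsupp

lemma sum_single_ite (g : Fin (m-1) → ℕ) (c : ℕ) (t₀ : Fin (m-1)) :
    (∑ t, single (g t) (if t₀ = t then c else 0) : ℕ →₀ ℕ) = single (g t₀) c := by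
  rw [Finset.sum_eq_single t₀ (fun t _ ht => by rw [if_neg (fun h => ht h.symm)]; simp)
    (fun h => absurd (Finset.mem_univ t₀) h)]
  simp

lemma τ_single (v : DVar m) (k : ℕ) : τ (single v k) = k • wt m v := by
  cases v with
  | x1 =>
    have hD : Dd (single (.x1 : DVar m) k) = 0 := by simp [Dd, Finsupp.single_apply]
    have hC : ∀ t, Cc (single (.x1 : DVar m) k) t = 0 := by
      intro t; simp [Cc, Finsupp.single_apply]
    simp [τ, wt, hD, hC, fo, Finsupp.single_apply, Finsupp.smul_single, mul_comm]
  | xn =>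
    have hD : Dd (single (.xn : DVar m) k) = 0 := by simp [Dd, Finsupp.single_apply]
    have hC : ∀ t, Cc (single (.xn : DVar m) k) t = 0 := by
      intro t; simp [Cc, Finsupp.single_apply]
    simp [τ, wt, hD, hC, fo, Finsupp.single_apply, Finsupp.smul_single, mul_comm]
  | xJc t₀ =>
    have hD : Dd (single (.xJc t₀ : DVar m) k) = 0 := by simp [Dd, Finsupp.single_apply]
    have hC : ∀ t, Cc (single (.xJc t₀ : DVar m) k) t = 0 := by
      intro t; simp [Cc, Finsupp.single_apply]
    have hfo : ∀ t, fo (single (.xJc t₀ : DVar m) k) t = 0 := by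
      intro t; simp [fo, hC, Finsupp.single_apply]
    have hb : ∀ t, (single (.xJc t₀ : DVar m) k) (.xJc t) = if t₀ = t then k else 0 := by
      intro t; simp [Finsupp.single_apply]
    simp [τ, wt, hD, hfo, hb, sum_single_ite, Finsupp.single_apply,
      Finsupp.smul_single, mul_comm]
  | xJ t₀ =>
    have hD : Dd (single (.xJ t₀ : DVar m) k) = 0 := by simp [Dd, Finsupp.single_apply]
    have hC : ∀ t, Cc (single (.xJ t₀ : DVar m) k) t = 0 := by
      intro t; simp [Cc, Finsupp.single_apply]
    have hfo : ∀ t, fo (single (.xJ t₀ : DVar m) k) t = if t₀ = t then 2*k else 0 := by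
      intro t; simp [fo, hC, Finsupp.single_apply, mul_ite]
    simp [τ, wt, hD, hfo, sum_single_ite, Finsupp.single_apply,
      Finsupp.smul_single, mul_comm]
  | y t₀ =>
    have hD : Dd (single (.y t₀ : DVar m) k) = k := by simp [Dd, Finsupp.single_apply]
    have hC : ∀ t, Cc (single (.y t₀ : DVar m) k) t = 0 := by
      intro t; simp [Cc, Finsupp.single_apply]
    have hfo : ∀ t, fo (single (.y t₀ : DVar m) k) t = if t₀ = t then k else 0 := by
      intro t; simp [fo, hC, Finsupp.single_apply]
    simp only [τ, wt, hD, hfo, sum_single_ite]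
    simp [Finsupp.single_apply, Finsupp.smul_single, smul_add]
    abel
  | xP s₀ t₀ h₀ =>
    have hD : Dd (single (.xP s₀ t₀ h₀ : DVar m) k) = 0 := by
      simp [Dd, Finsupp.single_apply]
    have hC : ∀ t, Cc (single (.xP s₀ t₀ h₀ : DVar m) k) t
        = (if t₀ = t then k else 0) + (if s₀ = t then k else 0) := by
      intro t
      unfold Cc
      have e1 : (∑ s, if h : s < t then (single (.xP s₀ t₀ h₀ : DVar m) k) (.xP s t h) else 0)
          = (if t₀ = t then k else 0) := by
        by_cases ht : t₀ = t
        · subst ht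
          rw [if_pos rfl]
          rw [Finset.sum_eq_single s₀
            (fun s _ hs => by
              by_cases h : s < t₀
              · rw [dif_pos h, Finsupp.single_apply, if_neg (by simp [Ne.symm hs])]
              · rw [dif_neg h])
            (fun h => absurd (Finset.mem_univ s₀) h)]
          rw [dif_pos h₀, Finsupp.single_apply, if_pos rfl]
        · rw [if_neg ht, Finset.sum_eq_zero]
          intro s _
          by_cases h : s < t
          · rw [dif_pos h, Finsupp.single_apply, if_neg (by simp; intro _ h'; exact ht h')]
          · rw [dif_neg h]
      have e2 : (∑ u, if h : t < u then (single (.xP s₀ t₀ h₀ : DVar m) k) (.xP t u h) else 0)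
          = (if s₀ = t then k else 0) := by
        by_cases hs : s₀ = t
        · subst hs
          rw [if_pos rfl]
          rw [Finset.sum_eq_single t₀
            (fun u _ hu => by
              by_cases h : s₀ < u
              · rw [dif_pos h, Finsupp.single_apply, if_neg (by simp [Ne.symm hu])]
              · rw [dif_neg h])
            (fun h => absurd (Finset.mem_univ t₀) h)]
          rw [dif_pos h₀, Finsupp.single_apply, if_pos rfl]
        · rw [if_neg hs, Finset.sum_eq_zero]
          intro u _
          by_cases h : t < u
          · rw [dif_pos h, Finsupp.single_apply, if_neg (by simp; intro h' _; exact hs h')]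
          · rw [dif_neg h]
      rw [e1, e2]
    have hfo : ∀ t, fo (single (.xP s₀ t₀ h₀ : DVar m) k) t
        = (if t₀ = t then k else 0) + (if s₀ = t then k else 0) := by
      intro t; simp [fo, hC, Finsupp.single_apply]
    have hsum : (∑ t, single (2*t.val+3) (fo (single (.xP s₀ t₀ h₀ : DVar m) k) t) : ℕ →₀ ℕ)
        = single (2*t₀.val+3) k + single (2*s₀.val+3) k := by
      simp only [hfo, Finsupp.single_add]
      rw [Finset.sum_add_distrib, sum_single_ite, sum_single_ite]
    simp [τ, wt, hD, hsum, Finsupp.single_apply, Finsupp.smul_single]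
    abel

end DP
namespace DP
variable {K : Type*} [Field K] {m : ℕ}
open Finsupp

lemma wt_image (K : Type*) [Field K] (m : ℕ) (v : DVar m) :
    dImage K m v = monomial (wt m v) 1 := by
  cases v <;>
    simp [dImage, wt, X, monomial_mul, monomial_pow, Finsupp.smul_single, add_assoc]

lemma piD_monomial (σ : Exp m) :
    piD K m (monomial σ 1) = monomial (τ σ) 1 := by
  induction σ using Finsupp.induction with
  | zero => simp [τ_zero]
  | single_add v k σ hv hk ih =>
    have h1 : (monomial (single v k + σ) (1:K)) = monomial (single v k) 1 * monomial σ 1 := by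
      rw [monomial_mul, one_mul]
    have h2 : (monomial (single v k) (1:K)) = X v ^ k := X_pow_eq_monomial.symm
    rw [h1, map_mul, ih, h2, map_pow]
    have h3 : piD K m (X v) = monomial (wt m v) 1 := by
      simp [piD, wt_image]
    rw [h3, monomial_pow, one_pow, τ_add, τ_single, monomial_mul, one_mul]

lemma piD_GD_eq_zero (g : MvPolynomial (DVar m) K) (hg : g ∈ GD K m) : piD K m g = 0 := by
  simp only [GD, Set.mem_setOf_eq] at hg
  rcases hg with ⟨i,j,k,l,hij,hjk,hkl,(rfl|rfl)⟩ | ⟨i,j,k,hij,hjk,(rfl|rfl|rfl|rfl|rfl)⟩ |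
    ⟨i,j,hij,(rfl|rfl|rfl|rfl)⟩ | ⟨i,rfl⟩ <;>
    simp [piD, dImage] <;> ring

end DP
namespace DP
variable {K : Type*} [Field K] {m : ℕ}
open Finsupp

inductive Rule (m : ℕ) where
  | r1a (i j k l : Fin (m-1)) (hij : i < j) (hjk : j < k) (hkl : k < l)
  | r1b (i j k l : Fin (m-1)) (hij : i < j) (hjk : j < k) (hkl : k < l)
  | r2a (i j k : Fin (m-1)) (hij : i < j) (hjk : j < k)
  | r2b (i j k : Fin (m-1)) (hij : i < j) (hjk : j < k)
  | r2c (i j k : Fin (m-1)) (hij : i < j) (hjk : j < k)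
  | r2d (i j k : Fin (m-1)) (hij : i < j) (hjk : j < k)
  | r2e (i j k : Fin (m-1)) (hij : i < j) (hjk : j < k)
  | r3a (i j : Fin (m-1)) (hij : i < j)
  | r3b (i j : Fin (m-1)) (hij : i < j)
  | r3c (i j : Fin (m-1)) (hij : i < j)
  | r3d (i j : Fin (m-1)) (hij : i < j)
  | r4 (i : Fin (m-1))

noncomputable def lhs : Rule m → Exp m
  | .r1a i _ k l hij hjk hkl => single (.xP i k (hij.trans hjk)) 1 + single (.xP _ l (hjk.trans hkl)) 1
  | .r1b i j k l hij hjk hkl => single (.xP i l (hij.trans (hjk.trans hkl))) 1 + single (.xP j k hjk) 1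
  | .r2a i j k hij hjk => single (.xP i j hij) 1 + single (.xP i k (hij.trans hjk)) 1
  | .r2b i j k hij hjk => single (.xJ j) 1 + single (.xP i k (hij.trans hjk)) 1
  | .r2c i j k hij _ => single (.xJ k) 1 + single (.xP i j hij) 1
  | .r2d i j k _ hjk => single (.xP j k hjk) 1 + single (.y i) 1
  | .r2e i j k hij hjk => single (.xP i k (hij.trans hjk)) 1 + single (.y j) 1
  | .r3a i j _ => single (.xJ i) 1 + single (.xJ j) 1
  | .r3b i j _ => single (.xJ j) 1 + single (.y i) 1
  | .r3c i j hij => single (.xP i j hij) 1 + single (.y i) 1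
  | .r3d i j hij => single (.xP i j hij) 1 + single .x1 1 + single .xn 1
  | .r4 i => single (.xJ i) 1 + single .x1 1 + single .xn 1

noncomputable def rhs : Rule m → Exp m
  | .r1a i j k l hij _ hkl => single (.xP i j hij) 1 + single (.xP k l hkl) 1
  | .r1b i j k l hij _ hkl => single (.xP i j hij) 1 + single (.xP k l hkl) 1
  | .r2a i j k _ hjk => single (.xJ i) 1 + single (.xP j k hjk) 1
  | .r2b i j k hij hjk => single (.xP i j hij) 1 + single (.xP j k hjk) 1
  | .r2c i j k hij hjk => single (.xP i k (hij.trans hjk)) 1 + single (.xP j k hjk) 1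
  | .r2d i j k hij hjk => single (.xP i j hij) 1 + single (.y k) 1
  | .r2e i j k hij hjk => single (.xP i j hij) 1 + single (.y k) 1
  | .r3a i j hij => single (.xP i j hij) 2
  | .r3b i j hij => single (.xP i j hij) 1 + single (.y j) 1
  | .r3c i j _ => single (.xJ i) 1 + single (.y j) 1
  | .r3d i j _ => single (.y i) 1 + single (.y j) 1
  | .r4 i => single (.y i) 2

lemma Xmul (a b : DVar m) :
    (X a * X b : MvPolynomial (DVar m) K) = monomial (single a 1 + single b 1) 1 := by
  rw [X, X, monomial_mul, one_mul]

lemma Xmul3 (a b c : DVar m) :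
    (X a * X b * X c : MvPolynomial (DVar m) K)
      = monomial (single a 1 + single b 1 + single c 1) 1 := by
  rw [Xmul, X, monomial_mul, one_mul]

lemma Xsq (a : DVar m) : (X a ^ 2 : MvPolynomial (DVar m) K) = monomial (single a 2) 1 :=
  X_pow_eq_monomial

lemma rule_mem_GD (r : Rule m) :
    monomial (lhs r) (1:K) - monomial (rhs r) 1 ∈ GD K m := by
  cases r with
  | r1a i j k l hij hjk hkl =>
    exact Or.inl ⟨i,j,k,l,hij,hjk,hkl, Or.inl (by rw [Xmul, Xmul]; rfl)⟩
  | r1b i j k l hij hjk hkl =>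
    exact Or.inl ⟨i,j,k,l,hij,hjk,hkl, Or.inr (by rw [Xmul, Xmul]; rfl)⟩
  | r2a i j k hij hjk =>
    exact Or.inr (Or.inl ⟨i,j,k,hij,hjk, Or.inl (by rw [Xmul, Xmul]; rfl)⟩)
  | r2b i j k hij hjk =>
    exact Or.inr (Or.inl ⟨i,j,k,hij,hjk, Or.inr (Or.inl (by rw [Xmul, Xmul]; rfl))⟩)
  | r2c i j k hij hjk =>
    exact Or.inr (Or.inl ⟨i,j,k,hij,hjk, Or.inr (Or.inr (Or.inl (by rw [Xmul, Xmul]; rfl)))⟩)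
  | r2d i j k hij hjk =>
    exact Or.inr (Or.inl ⟨i,j,k,hij,hjk, Or.inr (Or.inr (Or.inr (Or.inl
      (by rw [Xmul, Xmul]; rfl))))⟩)
  | r2e i j k hij hjk =>
    exact Or.inr (Or.inl ⟨i,j,k,hij,hjk, Or.inr (Or.inr (Or.inr (Or.inr
      (by rw [Xmul, Xmul]; rfl))))⟩)
  | r3a i j hij =>
    exact Or.inr (Or.inr (Or.inl ⟨i,j,hij, Or.inl (by rw [Xmul, Xsq]; rfl)⟩))
  | r3b i j hij =>
    exact Or.inr (Or.inr (Or.inl ⟨i,j,hij, Or.inr (Or.inl (by rw [Xmul, Xmul]; rfl))⟩))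
  | r3c i j hij =>
    exact Or.inr (Or.inr (Or.inl ⟨i,j,hij, Or.inr (Or.inr (Or.inl (by rw [Xmul, Xmul]; rfl)))⟩))
  | r3d i j hij =>
    exact Or.inr (Or.inr (Or.inl ⟨i,j,hij, Or.inr (Or.inr (Or.inr
      (by rw [Xmul3, Xmul]; rfl)))⟩))
  | r4 i =>
    exact Or.inr (Or.inr (Or.inr ⟨i, by rw [Xmul3, Xsq]; rfl⟩))

lemma τ_rule (r : Rule m) : τ (lhs r) = τ (rhs r) := by
  have h := piD_GD_eq_zero (K := ℚ) _ (rule_mem_GD (m := m) r)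
  rw [map_sub, piD_monomial, piD_monomial, sub_eq_zero] at h
  exact monomial_left_injective one_ne_zero h

end DP
namespace DP
variable {m : ℕ}
open Finsupp

def w1 : DVar m → ℕ
  | .x1 => 1 | .xn => 1 | _ => 0
def w2 (m : ℕ) : DVar m → ℕ
  | .y t => m - t.val | _ => 0
def w3 : DVar m → ℕ
  | .xJ t => 2 * 3 ^ t.val | .xP _ t _ => 3 ^ t.val | _ => 0

noncomputable def μ1 (σ : Exp m) : ℕ := σ.sum fun v k => k * w1 v
noncomputable def μ2 (σ : Exp m) : ℕ := σ.sum fun v k => k * w2 m v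
noncomputable def μ3 (σ : Exp m) : ℕ := σ.sum fun v k => k * w3 v

lemma μ1_add (σ ρ : Exp m) : μ1 (σ + ρ) = μ1 σ + μ1 ρ :=
  Finsupp.sum_add_index' (fun v => by simp) (fun v b c => by ring)
lemma μ2_add (σ ρ : Exp m) : μ2 (σ + ρ) = μ2 σ + μ2 ρ :=
  Finsupp.sum_add_index' (fun v => by simp) (fun v b c => by ring)
lemma μ3_add (σ ρ : Exp m) : μ3 (σ + ρ) = μ3 σ + μ3 ρ :=
  Finsupp.sum_add_index' (fun v => by simp) (fun v b c => by ring)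

@[simp] lemma μ1_single (v : DVar m) (k : ℕ) : μ1 (single v k) = k * w1 v :=
  Finsupp.sum_single_index (by simp)
@[simp] lemma μ2_single (v : DVar m) (k : ℕ) : μ2 (single v k) = k * w2 m v :=
  Finsupp.sum_single_index (by simp)
@[simp] lemma μ3_single (v : DVar m) (k : ℕ) : μ3 (single v k) = k * w3 v :=
  Finsupp.sum_single_index (by simp)

/-- lexicographic decrease of the measures along each rule -/
lemma rule_decrease (r : Rule m) :
    μ1 (rhs r) < μ1 (lhs r)
    ∨ (μ1 (rhs r) = μ1 (lhs r) ∧ (μ2 (rhs r) < μ2 (lhs r)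
    ∨ (μ2 (rhs r) = μ2 (lhs r) ∧ μ3 (rhs r) < μ3 (lhs r)))) := by
  have p3 : ∀ a b : ℕ, a < b → 3^a < 3^b := fun a b h => Nat.pow_lt_pow_right (by norm_num) h
  cases r with
  | r1a i j k l hij hjk hkl =>
    have h1 : 3 ^ j.val < 3 ^ k.val := p3 _ _ hjk
    refine Or.inr ⟨?_, Or.inr ⟨?_, ?_⟩⟩ <;>
      simp [lhs, rhs, μ1_add, μ2_add, μ3_add, w1, w2, w3] <;> omega
  | r1b i j k l hij hjk hkl =>
    have h1 : 3 ^ j.val < 3 ^ k.val := p3 _ _ hjk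
    refine Or.inr ⟨?_, Or.inr ⟨?_, ?_⟩⟩ <;>
      simp [lhs, rhs, μ1_add, μ2_add, μ3_add, w1, w2, w3] <;> omega
  | r2a i j k hij hjk =>
    have h1 : 3 ^ (i.val + 1) ≤ 3 ^ j.val := Nat.pow_le_pow_right (by norm_num) hij
    have h2 : 3 ^ (i.val + 1) = 3 * 3 ^ i.val := by ring
    have h3 : 0 < 3 ^ i.val := Nat.pow_pos (by norm_num)
    refine Or.inr ⟨?_, Or.inr ⟨?_, ?_⟩⟩ <;>
      simp [lhs, rhs, μ1_add, μ2_add, μ3_add, w1, w2, w3] <;> omega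
  | r2b i j k hij hjk =>
    have h1 : 0 < 3 ^ j.val := Nat.pow_pos (by norm_num)
    refine Or.inr ⟨?_, Or.inr ⟨?_, ?_⟩⟩ <;>
      simp [lhs, rhs, μ1_add, μ2_add, μ3_add, w1, w2, w3] <;> omega
  | r2c i j k hij hjk =>
    have h1 : 0 < 3 ^ j.val := Nat.pow_pos (by norm_num)
    refine Or.inr ⟨?_, Or.inr ⟨?_, ?_⟩⟩ <;>
      simp [lhs, rhs, μ1_add, μ2_add, μ3_add, w1, w2, w3] <;> omega
  | r2d i j k hij hjk =>
    have h1 : i.val < k.val := hij.trans hjk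
    have h2 : k.val < m - 1 := k.isLt
    refine Or.inr ⟨?_, Or.inl ?_⟩ <;>
      simp [lhs, rhs, μ1_add, μ2_add, μ3_add, w1, w2, w3] <;> omega
  | r2e i j k hij hjk =>
    have h1 : j.val < k.val := hjk
    have h2 : k.val < m - 1 := k.isLt
    refine Or.inr ⟨?_, Or.inl ?_⟩ <;>
      simp [lhs, rhs, μ1_add, μ2_add, μ3_add, w1, w2, w3] <;> omega
  | r3a i j hij =>
    have h1 : 0 < 3 ^ i.val := Nat.pow_pos (by norm_num)
    refine Or.inr ⟨?_, Or.inr ⟨?_, ?_⟩⟩ <;>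
      simp [lhs, rhs, μ1_add, μ2_add, μ3_add, w1, w2, w3] <;> omega
  | r3b i j hij =>
    have h1 : i.val < j.val := hij
    have h2 : j.val < m - 1 := j.isLt
    refine Or.inr ⟨?_, Or.inl ?_⟩ <;>
      simp [lhs, rhs, μ1_add, μ2_add, μ3_add, w1, w2, w3] <;> omega
  | r3c i j hij =>
    have h1 : i.val < j.val := hij
    have h2 : j.val < m - 1 := j.isLt
    refine Or.inr ⟨?_, Or.inl ?_⟩ <;>
      simp [lhs, rhs, μ1_add, μ2_add, μ3_add, w1, w2, w3] <;> omega
  | r3d i j hij =>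
    refine Or.inl ?_
    simp [lhs, rhs, μ1_add, μ2_add, μ3_add, w1, w2, w3]
  | r4 i =>
    refine Or.inl ?_
    simp [lhs, rhs, μ1_add, μ2_add, μ3_add, w1, w2, w3]

end DP
namespace DP
variable {m : ℕ}
open Finsupp

/-- `σ` is reducible if some rule's leading monomial divides it. -/
def Red (σ : Exp m) : Prop := ∃ r : Rule m, lhs r ≤ σ

lemma pair_le {σ : Exp m} {a b : DVar m} (hne : a ≠ b) (ha : 1 ≤ σ a) (hb : 1 ≤ σ b) :
    single a 1 + single b 1 ≤ σ := by
  rw [Finsupp.le_def]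
  intro v
  rw [Finsupp.add_apply, Finsupp.single_apply, Finsupp.single_apply]
  by_cases h1 : a = v <;> by_cases h2 : b = v <;> simp_all <;> omega

lemma triple_le {σ : Exp m} {a b c : DVar m} (hab : a ≠ b) (hac : a ≠ c) (hbc : b ≠ c)
    (ha : 1 ≤ σ a) (hb : 1 ≤ σ b) (hc : 1 ≤ σ c) :
    single a 1 + single b 1 + single c 1 ≤ σ := by
  rw [Finsupp.le_def]
  intro v
  rw [Finsupp.add_apply, Finsupp.add_apply, Finsupp.single_apply, Finsupp.single_apply,
    Finsupp.single_apply]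
  by_cases h1 : a = v <;> by_cases h2 : b = v <;> by_cases h3 : c = v <;> simp_all <;> omega

lemma xP_le_Cc_right (σ : Exp m) {s t : Fin (m-1)} (h : s < t) :
    σ (.xP s t h) ≤ Cc σ t := by
  unfold Cc
  have h1 : (if h' : s < t then σ (.xP s t h') else 0) ≤
      ∑ s', if h' : s' < t then σ (.xP s' t h') else 0 :=
    Finset.single_le_sum (f := fun s' => if h' : s' < t then σ (.xP s' t h') else 0)
      (fun i _ => Nat.zero_le _) (Finset.mem_univ s)
  rw [dif_pos h] at h1
  omega

lemma xP_le_Cc_left (σ : Exp m) {s t : Fin (m-1)} (h : s < t) :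
    σ (.xP s t h) ≤ Cc σ s := by
  unfold Cc
  have h1 : (if h' : s < t then σ (.xP s t h') else 0) ≤
      ∑ u, if h' : s < u then σ (.xP s u h') else 0 :=
    Finset.single_le_sum (f := fun u => if h' : s < u then σ (.xP s u h') else 0)
      (fun i _ => Nat.zero_le _) (Finset.mem_univ t)
  rw [dif_pos h] at h1
  omega

lemma y_le_fo (σ : Exp m) (t : Fin (m-1)) : σ (.y t) ≤ fo σ t := by
  unfold fo; omega

lemma xJ_le_fo (σ : Exp m) (t : Fin (m-1)) : 2 * σ (.xJ t) ≤ fo σ t := by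
  unfold fo; omega

lemma xP_le_fo_right (σ : Exp m) {s t : Fin (m-1)} (h : s < t) :
    σ (.xP s t h) ≤ fo σ t := by
  have := xP_le_Cc_right σ h; unfold fo; omega

lemma xP_le_fo_left (σ : Exp m) {s t : Fin (m-1)} (h : s < t) :
    σ (.xP s t h) ≤ fo σ s := by
  have := xP_le_Cc_left σ h; unfold fo; omega

lemma exists_pair_of_Cc_pos {σ : Exp m} {t : Fin (m-1)} (h : 0 < Cc σ t) :
    (∃ (s : Fin (m-1)) (hst : s < t), 0 < σ (.xP s t hst)) ∨ (∃ (u : Fin (m-1)) (htu : t < u), 0 < σ (.xP t u htu)) := by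
  unfold Cc at h
  rcases Nat.lt_or_ge 0 (∑ s, if h' : s < t then σ (.xP s t h') else 0) with h1 | h1
  · left
    obtain ⟨s, _, hs⟩ := Finset.exists_ne_zero_of_sum_ne_zero h1.ne'
    by_cases hst : s < t
    · exact ⟨s, hst, by rw [dif_pos hst] at hs; omega⟩
    · rw [dif_neg hst] at hs; exact absurd rfl hs
  · right
    have h2 : 0 < ∑ u, if h' : t < u then σ (.xP t u h') else 0 := by omega
    obtain ⟨u, _, hu⟩ := Finset.exists_ne_zero_of_sum_ne_zero h2.ne'
    by_cases htu : t < u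
    · exact ⟨u, htu, by rw [dif_pos htu] at hu; omega⟩
    · rw [dif_neg htu] at hu; exact absurd rfl hu

lemma exists_y_of_Dd_pos {σ : Exp m} (h : 0 < Dd σ) : ∃ w, 0 < σ (.y w) := by
  obtain ⟨w, _, hw⟩ := Finset.exists_ne_zero_of_sum_ne_zero h.ne'
  exact ⟨w, Nat.pos_of_ne_zero hw⟩

lemma Dd_le_sum_fo (σ : Exp m) : Dd σ ≤ ∑ t, fo σ t :=
  Finset.sum_le_sum fun t _ => y_le_fo σ t

/-- stripping one variable occurrence -/
lemma strip_eq {σ : Exp m} {v : DVar m} (h : 1 ≤ σ v) :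
    σ = (σ - single v 1) + single v 1 := by
  ext a
  simp only [Finsupp.add_apply, Finsupp.tsub_apply, Finsupp.single_apply]
  by_cases hv : v = a
  · subst hv; simp only [eq_self_iff_true, if_true]; omega
  · simp [hv]

lemma red_mono {σ ρ : Exp m} (h : σ ≤ ρ) (hr : Red σ) : Red ρ :=
  hr.imp fun r hle => le_trans hle h

noncomputable def dg (σ : Exp m) : ℕ := (τ σ).sum fun _ k => k

lemma dg_add (σ ρ : Exp m) : dg (σ + ρ) = dg σ + dg ρ := by
  unfold dg
  rw [τ_add]
  exact Finsupp.sum_add_index' (fun v => rfl) (fun v b c => rfl)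

lemma dg_single_pos (v : DVar m) : 1 ≤ dg (single v 1) := by
  unfold dg
  rw [τ_single]
  cases v <;>
    simp [wt, Finsupp.sum_add_index', Finsupp.sum_single_index]

end DP
namespace DP
variable {m : ℕ}
open Finsupp

lemma y_le_Dd (σ : Exp m) (t : Fin (m-1)) : σ (.y t) ≤ Dd σ :=
  Finset.single_le_sum (f := fun t => σ (.y t)) (fun i _ => Nat.zero_le _) (Finset.mem_univ t)

/-- For an irreducible monomial, either there are no `x1`/`xn`, or the odd part is all `y`. -/
lemma Dd_cases {σ : Exp m} (hirr : ¬ Red σ) :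
    Dd σ = ∑ t, fo σ t ∨ σ .x1 = 0 ∨ σ .xn = 0 := by
  by_cases hx : 1 ≤ σ .x1 ∧ 1 ≤ σ .xn
  · have hxJ : ∀ t, σ (.xJ t) = 0 := by
      intro t; by_contra h
      exact hirr ⟨.r4 t, triple_le (by simp) (by simp) (by simp) (by omega) hx.1 hx.2⟩
    have hxP : ∀ s t (h : s < t), σ (.xP s t h) = 0 := by
      intro s t h; by_contra hc
      exact hirr ⟨.r3d s t h, triple_le (by simp) (by simp) (by simp) (by omega) hx.1 hx.2⟩
    have hCc : ∀ t, Cc σ t = 0 := by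
      intro t
      unfold Cc
      have e1 : (∑ s, if h : s < t then σ (.xP s t h) else 0) = 0 :=
        Finset.sum_eq_zero (fun s _ => by
          by_cases h : s < t
          · rw [dif_pos h]; exact hxP _ _ h
          · rw [dif_neg h])
      have e2 : (∑ u, if h : t < u then σ (.xP t u h) else 0) = 0 :=
        Finset.sum_eq_zero (fun u _ => by
          by_cases h : t < u
          · rw [dif_pos h]; exact hxP _ _ h
          · rw [dif_neg h])
      rw [e1, e2]
    left
    unfold Dd
    exact (Finset.sum_congr rfl (fun t _ => by unfold fo; rw [hxJ, hCc]; omega)).symm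
  · right; omega

/-- If the total `y`-degree is positive, the top index of the odd part carries a `y`. -/
lemma y_top {σ : Exp m} (hirr : ¬Red σ) (hD : 1 ≤ Dd σ) {T : Fin (m-1)}
    (hfT : 0 < fo σ T) (htop : ∀ u, T < u → fo σ u = 0) : 1 ≤ σ (.y T) := by
  by_contra hyT
  push_neg at hyT
  obtain ⟨w, hw⟩ := exists_y_of_Dd_pos hD
  have hwT : w ≠ T := fun h => by subst h; omega
  have hwlt : w < T := by
    rcases lt_or_gt_of_ne hwT with h | h
    · exact h
    · have h1 := htop w h
      have h2 := y_le_fo σ w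
      omega
  have h2 : 1 ≤ 2 * σ (.xJ T) + Cc σ T := by
    unfold fo at hfT; omega
  by_cases hJ : 1 ≤ σ (.xJ T)
  · exact hirr ⟨.r3b w T hwlt, pair_le (by simp) hJ hw⟩
  · have hC : 0 < Cc σ T := by omega
    rcases exists_pair_of_Cc_pos hC with ⟨s, hst, hs⟩ | ⟨u, htu, hu⟩
    · rcases lt_trichotomy w s with h | h | h
      · exact hirr ⟨.r2d w s T h hst, pair_le (by simp) hs hw⟩
      · subst h
        exact hirr ⟨.r3c w T hst, pair_le (by simp) hs hw⟩
      · exact hirr ⟨.r2e s w T h hwlt, pair_le (by simp) hs hw⟩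
    · have h3 := xP_le_fo_right σ htu
      rw [htop u htu] at h3
      omega

/-- No `y`'s: the top two indices of the odd part are linked by a pair. -/
lemma pair_top {σ : Exp m} (hirr : ¬Red σ) (hd : ∀ t, σ (.y t) = 0)
    {S T : Fin (m-1)} (hST : S < T) (hfS : 0 < fo σ S) (hfT : 0 < fo σ T)
    (htop : ∀ u, T < u → fo σ u = 0)
    (hgap : ∀ u, S < u → u ≠ T → fo σ u = 0) : 0 < σ (.xP S T hST) := by
  have noup : ∀ (u) (h : T < u), σ (.xP T u h) = 0 := fun u h => by
    have h1 := xP_le_fo_right σ h; rw [htop u h] at h1; omega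
  have hfT' : 0 < 2 * σ (.xJ T) + Cc σ T := by
    unfold fo at hfT; have := hd T; omega
  have hfS' : 0 < 2 * σ (.xJ S) + Cc σ S := by
    unfold fo at hfS; have := hd S; omega
  by_cases hJT : 1 ≤ σ (.xJ T)
  · have hJS : σ (.xJ S) = 0 := by
      by_contra h
      exact hirr ⟨.r3a S T hST, pair_le (by simp [hST.ne]) (by omega) hJT⟩
    have hCS : 0 < Cc σ S := by omega
    rcases exists_pair_of_Cc_pos hCS with ⟨v, hvS, hv⟩ | ⟨u, hSu, hu⟩
    · exact absurd ⟨.r2c v S T hvS hST, pair_le (by simp) hJT hv⟩ hirr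
    · by_cases huT : u = T
      · subst huT; exact hu
      · have h1 := xP_le_fo_right σ hSu
        rw [hgap u hSu huT] at h1
        omega
  · have hCT : 0 < Cc σ T := by omega
    rcases exists_pair_of_Cc_pos hCT with ⟨s, hsT, hs⟩ | ⟨u, hTu, hu⟩
    · rcases lt_trichotomy s S with h | h | h
      · -- s < S
        have hJS : σ (.xJ S) = 0 := by
          by_contra hj
          exact hirr ⟨.r2b s S T h hST, pair_le (by simp) (by omega) hs⟩
        have hCS : 0 < Cc σ S := by omega
        rcases exists_pair_of_Cc_pos hCS with ⟨v, hvS, hv⟩ | ⟨u, hSu, hu⟩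
        · rcases lt_trichotomy v s with h2 | h2 | h2
          · exact absurd ⟨.r1a v s S T h2 h hST,
              pair_le (by simp [hST.ne]) hv hs⟩ hirr
          · subst h2
            exact absurd ⟨.r2a v S T hvS hST,
              pair_le (by simp [hST.ne]) hv hs⟩ hirr
          · exact absurd ⟨.r1b s v S T h2 hvS hST,
              pair_le (by simp [hST.ne']) hs hv⟩ hirr
        · by_cases huT : u = T
          · subst huT; exact hu
          · have h1 := xP_le_fo_right σ hSu
            rw [hgap u hSu huT] at h1
            omega
      · subst h; exact hs
      · -- S < s < T : gap says fo s = 0, contradiction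
        have h1 := xP_le_fo_left σ hsT
        rw [hgap s h hsT.ne] at h1
        omega
    · have := noup u hTu; omega

/-- No `y`'s and a single odd support index: it carries an `xJ`. -/
lemma singleton_xJ {σ : Exp m} (hd : ∀ t, σ (.y t) = 0) {T : Fin (m-1)}
    (hfT : 0 < fo σ T) (honly : ∀ u, u ≠ T → fo σ u = 0) : 0 < σ (.xJ T) := by
  have hCT : Cc σ T = 0 := by
    by_contra h
    rcases exists_pair_of_Cc_pos (Nat.pos_of_ne_zero h) with ⟨s, hsT, hs⟩ | ⟨u, hTu, hu⟩
    · have h1 := xP_le_fo_left σ hsT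
      rw [honly s hsT.ne] at h1; omega
    · have h1 := xP_le_fo_right σ hTu
      rw [honly u hTu.ne'] at h1; omega
  unfold fo at hfT
  have := hd T
  omega

end DP
namespace DP
variable {m : ℕ}
open Finsupp

theorem irred_eq (N : ℕ) : ∀ (σ σ' : Exp m), dg σ ≤ N → ¬Red σ → ¬Red σ' →
    τ σ = τ σ' → σ = σ' := by
  induction N using Nat.strong_induction_on with
  | _ N IH =>
  intro σ σ' hdg h1 h2 hττ
  have Hodd : ∀ t, fo σ t = fo σ' t := fun t => by
    have h := congrArg (fun g : ℕ →₀ ℕ => g (2*t.val+3)) hττ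
    simpa [τ_apply_odd] using h
  have H1 : 2 * σ .x1 + Dd σ = 2 * σ' .x1 + Dd σ' := by
    have h := congrArg (fun g : ℕ →₀ ℕ => g 1) hττ
    simpa [τ_apply_one] using h
  have Hn : 2 * σ .xn + Dd σ = 2 * σ' .xn + Dd σ' := by
    have h := congrArg (fun g : ℕ →₀ ℕ => g (2*m)) hττ
    simpa [τ_apply_n] using h
  have Hb : ∀ t, σ (.xJc t) = σ' (.xJc t) := fun t => by
    have h := congrArg (fun g : ℕ →₀ ℕ => g (2*t.val+2)) hττ
    simpa [τ_apply_even] using h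
  have HF : ∑ t, fo σ t = ∑ t, fo σ' t :=
    Finset.sum_congr rfl (fun t _ => Hodd t)
  have HD : Dd σ = Dd σ' := by
    have c1 := Dd_cases h1
    have c2 := Dd_cases h2
    have l1 := Dd_le_sum_fo σ
    have l2 := Dd_le_sum_fo σ'
    omega
  -- generic strip step
  have strip : ∀ v : DVar m, 1 ≤ σ v → 1 ≤ σ' v → σ = σ' := by
    intro v hv hv'
    have e : σ = (σ - single v 1) + single v 1 := strip_eq hv
    have e' : σ' = (σ' - single v 1) + single v 1 := strip_eq hv'
    have hτρ : τ (σ - single v 1) = τ (σ' - single v 1) := by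
      have h3 : τ (σ - single v 1) + τ (single v 1)
          = τ (σ' - single v 1) + τ (single v 1) := by
        rw [← τ_add, ← τ_add, ← e, ← e', hττ]
      exact add_right_cancel h3
    have hdg' : dg (σ - single v 1) < N := by
      have h3 := dg_single_pos v
      have h4 : dg σ = dg (σ - single v 1) + dg (single v 1) := by
        conv_lhs => rw [e]
        rw [dg_add]
      omega
    have h5 := IH (dg (σ - single v 1)) hdg' (σ - single v 1) (σ' - single v 1) le_rfl
      (fun hr => h1 (red_mono tsub_le_self hr))
      (fun hr => h2 (red_mono tsub_le_self hr)) hτρ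
    rw [e, e', h5]
  by_cases hD : 1 ≤ Dd σ
  · -- strip the top y
    have hne : (Finset.univ.filter (fun t => 0 < fo σ t)).Nonempty := by
      by_contra h
      rw [Finset.not_nonempty_iff_eq_empty] at h
      have hz : ∀ t, fo σ t = 0 := by
        intro t
        by_contra ht
        have : t ∈ Finset.univ.filter (fun t => 0 < fo σ t) :=
          Finset.mem_filter.mpr ⟨Finset.mem_univ t, Nat.pos_of_ne_zero ht⟩
        rw [h] at this
        exact absurd this (Finset.notMem_empty t)
      have := Dd_le_sum_fo σ
      rw [Finset.sum_eq_zero (fun t _ => hz t)] at this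
      omega
    set T := (Finset.univ.filter (fun t => 0 < fo σ t)).max' hne with hT
    have hfT : 0 < fo σ T := (Finset.mem_filter.mp (Finset.max'_mem _ hne)).2
    have htop : ∀ u, T < u → fo σ u = 0 := by
      intro u hu
      by_contra h
      have hmem : u ∈ Finset.univ.filter (fun t => 0 < fo σ t) :=
        Finset.mem_filter.mpr ⟨Finset.mem_univ u, Nat.pos_of_ne_zero h⟩
      exact absurd (Finset.le_max' _ u hmem) (not_le.mpr hu)
    have htop' : ∀ u, T < u → fo σ' u = 0 := fun u hu => by
      rw [← Hodd u]; exact htop u hu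
    exact strip (.y T) (y_top h1 hD hfT htop)
      (y_top h2 (HD ▸ hD) (Hodd T ▸ hfT) htop')
  · -- no y's
    have hd : ∀ t, σ (.y t) = 0 := fun t => by
      have := y_le_Dd σ t; omega
    have hd' : ∀ t, σ' (.y t) = 0 := fun t => by
      have := y_le_Dd σ' t; omega
    by_cases hfne : (Finset.univ.filter (fun t => 0 < fo σ t)).Nonempty
    · set T := (Finset.univ.filter (fun t => 0 < fo σ t)).max' hfne with hT
      have hfT : 0 < fo σ T := (Finset.mem_filter.mp (Finset.max'_mem _ hfne)).2
      have htop : ∀ u, T < u → fo σ u = 0 := by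
        intro u hu
        by_contra h
        have hmem : u ∈ Finset.univ.filter (fun t => 0 < fo σ t) :=
          Finset.mem_filter.mpr ⟨Finset.mem_univ u, Nat.pos_of_ne_zero h⟩
        exact absurd (Finset.le_max' _ u hmem) (not_le.mpr hu)
      have htop' : ∀ u, T < u → fo σ' u = 0 := fun u hu => by
        rw [← Hodd u]; exact htop u hu
      by_cases hSne : (Finset.univ.filter (fun t => 0 < fo σ t ∧ t < T)).Nonempty
      · set S := (Finset.univ.filter (fun t => 0 < fo σ t ∧ t < T)).max' hSne with hS
        obtain ⟨hfS, hST⟩ := (Finset.mem_filter.mp (Finset.max'_mem _ hSne)).2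
        have hgap : ∀ u, S < u → u ≠ T → fo σ u = 0 := by
          intro u hSu huT
          by_contra h
          have hmem1 : u ∈ Finset.univ.filter (fun t => 0 < fo σ t) :=
            Finset.mem_filter.mpr ⟨Finset.mem_univ u, Nat.pos_of_ne_zero h⟩
          have huT' : u < T := lt_of_le_of_ne (Finset.le_max' _ u hmem1) huT
          have hmem2 : u ∈ Finset.univ.filter (fun t => 0 < fo σ t ∧ t < T) :=
            Finset.mem_filter.mpr ⟨Finset.mem_univ u, Nat.pos_of_ne_zero h, huT'⟩
          exact absurd (Finset.le_max' _ u hmem2) (not_le.mpr hSu)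
        have hgap' : ∀ u, S < u → u ≠ T → fo σ' u = 0 := fun u h3 h4 => by
          rw [← Hodd u]; exact hgap u h3 h4
        exact strip (.xP S T hST)
          (pair_top h1 hd hST hfS hfT htop hgap)
          (pair_top h2 hd' hST (Hodd S ▸ hfS) (Hodd T ▸ hfT) htop' hgap')
      · have honly : ∀ u, u ≠ T → fo σ u = 0 := by
          intro u huT
          by_contra h
          have hmem1 : u ∈ Finset.univ.filter (fun t => 0 < fo σ t) :=
            Finset.mem_filter.mpr ⟨Finset.mem_univ u, Nat.pos_of_ne_zero h⟩
          have huT' : u < T := lt_of_le_of_ne (Finset.le_max' _ u hmem1) huT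
          exact hSne ⟨u, Finset.mem_filter.mpr
            ⟨Finset.mem_univ u, Nat.pos_of_ne_zero h, huT'⟩⟩
        have honly' : ∀ u, u ≠ T → fo σ' u = 0 := fun u h3 => by
          rw [← Hodd u]; exact honly u h3
        exact strip (.xJ T) (singleton_xJ hd hfT honly)
          (singleton_xJ hd' (Hodd T ▸ hfT) honly')
    · -- odd part identically zero: direct equality
      have hfo0 : ∀ t, fo σ t = 0 := by
        intro t
        by_contra h
        exact hfne ⟨t, Finset.mem_filter.mpr ⟨Finset.mem_univ t, Nat.pos_of_ne_zero h⟩⟩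
      have hfo0' : ∀ t, fo σ' t = 0 := fun t => by rw [← Hodd t]; exact hfo0 t
      ext v
      cases v with
      | x1 => omega
      | xn => omega
      | xJc t => exact Hb t
      | y t => rw [hd t, hd' t]
      | xJ t =>
        have a1 := xJ_le_fo σ t
        have a2 := xJ_le_fo σ' t
        rw [hfo0 t] at a1
        rw [hfo0' t] at a2
        omega
      | xP s t h =>
        have a1 := xP_le_fo_right σ h
        have a2 := xP_le_fo_right σ' h
        rw [hfo0 t] at a1
        rw [hfo0' t] at a2
        omega

end DP
namespace DP
open Finsupp
variable {m : ℕ}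

lemma lex3 {a1 b1 c1 a2 b2 c2 : ℕ}
    (h : a1 < a2 ∨ (a1 = a2 ∧ (b1 < b2 ∨ (b1 = b2 ∧ c1 < c2)))) :
    Prod.Lex (Prod.Lex (fun x y : ℕ => x < y) (fun x y : ℕ => x < y)) (fun x y : ℕ => x < y)
      ((a1, b1), c1) ((a2, b2), c2) := by
  rcases h with h | ⟨h1, h | ⟨h2, h3⟩⟩
  · exact Prod.Lex.left _ _ (Prod.Lex.left _ _ h)
  · subst h1; exact Prod.Lex.left _ _ (Prod.Lex.right _ h)
  · subst h1; subst h2; exact Prod.Lex.right _ h3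

theorem binom_mem (K : Type*) [Field K] {m : ℕ} (σ σ' : Exp m) (h : τ σ = τ σ') :
    (monomial σ (1:K) - monomial σ' 1) ∈ Ideal.span (GD K m) := by
  by_cases hr : Red σ
  · obtain ⟨r, hle⟩ := hr
    have e : σ = (σ - lhs r) + lhs r := (tsub_add_cancel_of_le hle).symm
    have key : monomial σ (1:K) - monomial ((σ - lhs r) + rhs r) 1 ∈ Ideal.span (GD K m) := by
      have e2 : monomial σ (1:K) - monomial ((σ - lhs r) + rhs r) 1
          = monomial (σ - lhs r) 1 * (monomial (lhs r) 1 - monomial (rhs r) 1) := by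
        rw [mul_sub, monomial_mul, monomial_mul, mul_one, ← e]
      rw [e2]
      exact Ideal.mul_mem_left _ _ (Ideal.subset_span (rule_mem_GD r))
    have hτ2 : τ ((σ - lhs r) + rhs r) = τ σ' := by
      rw [τ_add, ← τ_rule r, ← τ_add, ← e, h]
    have hrec := binom_mem K ((σ - lhs r) + rhs r) σ' hτ2
    have e3 : monomial σ (1:K) - monomial σ' 1
        = (monomial σ 1 - monomial ((σ - lhs r) + rhs r) 1)
          + (monomial ((σ - lhs r) + rhs r) 1 - monomial σ' 1) := by ring
    rw [e3]
    exact Ideal.add_mem _ key hrec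
  · by_cases hr' : Red σ'
    · obtain ⟨r, hle⟩ := hr'
      have e : σ' = (σ' - lhs r) + lhs r := (tsub_add_cancel_of_le hle).symm
      have key : monomial σ' (1:K) - monomial ((σ' - lhs r) + rhs r) 1 ∈ Ideal.span (GD K m) := by
        have e2 : monomial σ' (1:K) - monomial ((σ' - lhs r) + rhs r) 1
            = monomial (σ' - lhs r) 1 * (monomial (lhs r) 1 - monomial (rhs r) 1) := by
          rw [mul_sub, monomial_mul, monomial_mul, mul_one, ← e]
        rw [e2]
        exact Ideal.mul_mem_left _ _ (Ideal.subset_span (rule_mem_GD r))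
      have hτ2 : τ σ = τ ((σ' - lhs r) + rhs r) := by
        rw [τ_add, ← τ_rule r, ← τ_add, ← e, h]
      have hrec := binom_mem K σ ((σ' - lhs r) + rhs r) hτ2
      have e3 : monomial σ (1:K) - monomial σ' 1
          = (monomial σ 1 - monomial ((σ' - lhs r) + rhs r) 1)
            - (monomial σ' 1 - monomial ((σ' - lhs r) + rhs r) 1) := by ring
      rw [e3]
      exact Ideal.sub_mem _ hrec key
    · rw [irred_eq (dg σ) σ σ' le_rfl hr hr' h]
      simp
termination_by ((μ1 σ + μ1 σ', μ2 σ + μ2 σ'), μ3 σ + μ3 σ')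
decreasing_by
  · apply lex3
    set ρ := σ - lhs r with hρ
    rw [e]
    simp only [μ1_add, μ2_add, μ3_add]
    have hd := rule_decrease r
    omega
  · apply lex3
    set ρ := σ' - lhs r with hρ
    rw [e]
    simp only [μ1_add, μ2_add, μ3_add]
    have hd := rule_decrease r
    omega

end DP
namespace DP
open Finsupp
variable {K : Type*} [Field K] {m : ℕ}

lemma piD_monomial' (σ : Exp m) (c : K) :
    piD K m (monomial σ c) = monomial (τ σ) c := by
  have h : (monomial σ c : MvPolynomial (DVar m) K) = C c * monomial σ 1 := by
    rw [C_mul_monomial, mul_one]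
  rw [h, map_mul, piD_monomial]
  have hC : piD K m (C c) = C c := by simp [piD]
  rw [hC, C_mul_monomial, mul_one]

theorem ker_le : ∀ (n : ℕ) (f : MvPolynomial (DVar m) K), f.support.card ≤ n →
    piD K m f = 0 → f ∈ Ideal.span (GD K m) := by
  intro n
  induction n with
  | zero =>
    intro f hcard _
    have : f = 0 := by
      rw [← MvPolynomial.support_eq_empty]
      exact Finset.card_eq_zero.mp (Nat.le_zero.mp hcard)
    rw [this]; exact Ideal.zero_mem _
  | succ n IHn =>
    intro f hcard hker
    by_cases hf0 : f = 0
    · rw [hf0]; exact Ideal.zero_mem _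
    obtain ⟨σ0, hσ0⟩ := (MvPolynomial.support_nonempty.mpr hf0)
    have hc0 : MvPolynomial.coeff σ0 f ≠ 0 := MvPolynomial.mem_support_iff.mp hσ0
    have hπ : (0 : MvPolynomial ℕ K)
        = ∑ σ ∈ f.support, monomial (τ σ) (MvPolynomial.coeff σ f) := by
      rw [← hker]
      conv_lhs => rw [f.as_sum]
      rw [map_sum]
      exact Finset.sum_congr rfl (fun σ _ => piD_monomial' σ _)
    -- there must be a second monomial with the same image
    have hex : ∃ σ1 ∈ f.support, σ1 ≠ σ0 ∧ τ σ1 = τ σ0 := by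
      by_contra hno
      push_neg at hno
      have hco := congrArg (MvPolynomial.coeff (τ σ0)) hπ
      rw [MvPolynomial.coeff_zero] at hco
      rw [MvPolynomial.coeff_sum] at hco
      rw [Finset.sum_congr rfl
        (fun σ _ => MvPolynomial.coeff_monomial (τ σ0) (τ σ) (MvPolynomial.coeff σ f))] at hco
      rw [Finset.sum_eq_single_of_mem σ0 hσ0
        (fun b hb hbne => if_neg (hno b hb hbne)) ] at hco
      rw [if_pos rfl] at hco
      exact hc0 hco.symm
    obtain ⟨σ1, hσ1mem, hσ1ne, hτ1⟩ := hex
    set c := MvPolynomial.coeff σ0 f with hc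
    set g := (C c * (monomial σ0 1 - monomial σ1 1) : MvPolynomial (DVar m) K) with hg
    set f' := f - g with hf'
    have hbin : (monomial σ0 (1:K) - monomial σ1 1) ∈ Ideal.span (GD K m) :=
      binom_mem K σ0 σ1 hτ1.symm
    have hgmem : g ∈ Ideal.span (GD K m) := by
      rw [hg]; exact Ideal.mul_mem_left _ _ hbin
    have hf'ker : piD K m f' = 0 := by
      rw [hf', map_sub, hker, hg, map_mul, map_sub, piD_monomial, piD_monomial, hτ1]
      simp
    have hsupp : f'.support ⊆ f.support.erase σ0 := by
      intro σ hσ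
      have hσc : MvPolynomial.coeff σ f' ≠ 0 := MvPolynomial.mem_support_iff.mp hσ
      have hcoeff : MvPolynomial.coeff σ f' = MvPolynomial.coeff σ f
          - c * ((if σ0 = σ then 1 else 0) - (if σ1 = σ then 1 else 0)) := by
        rw [hf', hg]
        rw [MvPolynomial.coeff_sub, MvPolynomial.coeff_C_mul, MvPolynomial.coeff_sub,
          MvPolynomial.coeff_monomial, MvPolynomial.coeff_monomial]
      rw [Finset.mem_erase]
      constructor
      · intro heq
        subst heq
        rw [if_pos rfl, if_neg hσ1ne] at hcoeff
        simp [hc] at hcoeff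
        exact hσc hcoeff
      · rw [MvPolynomial.mem_support_iff]
        intro hz
        rw [hz] at hcoeff
        by_cases h0 : σ0 = σ
        · subst h0
          exact absurd hz hc0
        · by_cases h1 : σ1 = σ
          · subst h1
            exact absurd hz (MvPolynomial.mem_support_iff.mp hσ1mem)
          · rw [if_neg h0, if_neg h1] at hcoeff
            simp at hcoeff
            exact hσc hcoeff
    have hcard' : f'.support.card ≤ n := by
      have h1 := Finset.card_le_card hsupp
      have h2 : (f.support.erase σ0).card = f.support.card - 1 :=
        Finset.card_erase_of_mem hσ0
      omega
    have hrec := IHn f' hcard' hf'ker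
    have : f = f' + g := by rw [hf']; ring
    rw [this]
    exact Ideal.add_mem _ hrec hgmem

end DP

/-- the ideal of `R` generated by `𝒢_{D_{2m}}` equals the toric ideal
`I_{D_{2m}} = ker π`. -/
theorem GD_span_eq_ker (K : Type*) [Field K] (m : ℕ) (hm : 2 ≤ m) :
    Ideal.span (GD K m) = RingHom.ker (piD K m) := by
  apply le_antisymm
  · rw [Ideal.span_le]
    intro g hg
    have := DP.piD_GD_eq_zero g hg
    simpa [RingHom.mem_ker] using this
  · intro f hf
    have hker : piD K m f = 0 := by simpa [RingHom.mem_ker] using hf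
    exact DP.ker_le f.support.card f le_rfl hker
end

section
/- The set 𝒢_{D_{2m}} is a minimal generating set of the toric ideal I_{D_{2m}}: the ideal generated by 𝒢_{D_{2m}} equals I_{D_{2m}}, and no proper subset of 𝒢_{D_{2m}} generates I_{D_{2m}}. -/
open MvPolynomial

noncomputable section DTor

open MvPolynomial Finsupp

variable {K : Type*} [Field K] {m : ℕ}

instance : DecidableEq (DVar m) := Classical.decEq _

/-- exponent image of each variable -/
def ev : DVar m → (ℕ →₀ ℕ)
  | .x1 => Finsupp.single 1 2
  | .xn => Finsupp.single (2 * m) 2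
  | .xJ t => Finsupp.single (2 * t.val + 3) 2
  | .xJc t => Finsupp.single (2 * t.val + 2) 1
  | .xP s t _ => Finsupp.single (2 * s.val + 3) 1 + Finsupp.single (2 * t.val + 3) 1
  | .y t => Finsupp.single (2 * t.val + 3) 1 + Finsupp.single 1 1 + Finsupp.single (2 * m) 1

def EE : (DVar m →₀ ℕ) →ₗ[ℕ] (ℕ →₀ ℕ) := Finsupp.linearCombination ℕ ev

lemma EE_single (v : DVar m) (n : ℕ) : EE (Finsupp.single v n) = n • ev v :=
  Finsupp.linearCombination_single _ _ _

def D2 (u v : DVar m) : DVar m →₀ ℕ := Finsupp.single u 1 + Finsupp.single v 1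

def D3 (u v w : DVar m) : DVar m →₀ ℕ :=
  Finsupp.single u 1 + Finsupp.single v 1 + Finsupp.single w 1

lemma D2_comm (u v : DVar m) : D2 u v = D2 v u := add_comm _ _

/-- symmetrised pair variable -/
def pvar (s t : Fin (m - 1)) : DVar m :=
  if h : s < t then .xP s t h else if h' : t < s then .xP t s h' else .xJ s

lemma pvar_comm {s t : Fin (m - 1)} (h : s ≠ t) : pvar s t = pvar t s := by
  rcases lt_or_gt_of_ne h with h1 | h1 <;>
    simp [pvar, h1, h1.asymm, dif_neg (lt_asymm h1)]

lemma xP_eq_pvar {s t : Fin (m - 1)} (h : s < t) : DVar.xP s t h = pvar s t := by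
  simp [pvar, h]

/-- total degree of an exponent vector -/
def deg (a : DVar m →₀ ℕ) : ℕ := a.sum fun _ n => n

/-- number of `y`-variables counted with multiplicity -/
def yw : DVar m → ℕ | .y _ => 1 | _ => 0

def ycount (a : DVar m →₀ ℕ) : ℕ := a.sum fun v n => yw v * n

lemma deg_add (a b : DVar m →₀ ℕ) : deg (a + b) = deg a + deg b := by
  unfold deg; rw [Finsupp.sum_add_index] <;> simp

lemma ycount_add (a b : DVar m →₀ ℕ) : ycount (a + b) = ycount a + ycount b := by
  unfold ycount; rw [Finsupp.sum_add_index] <;> intros <;> simp [Nat.mul_add]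

lemma deg_single (v : DVar m) (n : ℕ) : deg (Finsupp.single v n) = n := by
  unfold deg; simp

lemma ycount_single (v : DVar m) (n : ℕ) : ycount (Finsupp.single v n) = yw v * n := by
  unfold ycount
  rcases eq_or_ne n 0 with h | h
  · simp [h]
  · exact Finsupp.sum_single_index (by simp)

lemma X_mul_X (u v : DVar m) :
    (X u * X v : MvPolynomial (DVar m) K) = monomial (D2 u v) 1 := by
  rw [X, X, monomial_mul, D2, mul_one]

lemma X_sq (u : DVar m) : (X u ^ 2 : MvPolynomial (DVar m) K) = monomial (D2 u u) 1 := by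
  rw [sq, X_mul_X]

lemma X_mul_X_mul_X (u v w : DVar m) :
    (X u * X v * X w : MvPolynomial (DVar m) K) = monomial (D3 u v w) 1 := by
  rw [X_mul_X, X, monomial_mul, D3, mul_one, D2]

lemma piD_monomial (a : DVar m →₀ ℕ) (c : K) :
    piD K m (monomial a c) = monomial (EE a) c := by
  have h1 : ∀ a : DVar m →₀ ℕ, piD K m (monomial a 1) = monomial (EE a) 1 := by
    intro a
    induction a using Finsupp.induction with
    | zero => simp [piD, EE]
    | single_add v n a hv hn ih =>
      have hd : ∀ v : DVar m, dImage K m v = monomial (ev v) 1 := by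
        intro v
        cases v <;>
          simp [dImage, ev, X_pow_eq_monomial, X, monomial_mul, sq] <;>
            rw [← Finsupp.single_add]
      have e1 : (monomial (Finsupp.single v n + a) (1:K)) =
          monomial (Finsupp.single v n) 1 * monomial a 1 := by
        rw [monomial_mul, mul_one]
      have e2 : (piD K m) ((monomial (Finsupp.single v n)) (1:K)) = monomial (n • ev v) 1 := by
        rw [show ((monomial (Finsupp.single v n)) (1:K)) = X v ^ n from (X_pow_eq_monomial).symm,
          map_pow, piD, aeval_X, hd, monomial_pow, one_pow]
      rw [e1, map_mul, ih, e2, monomial_mul, mul_one, map_add, EE_single]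
  have : (monomial a c : MvPolynomial (DVar m) K) = C c * monomial a 1 := by
    rw [C_mul_monomial, mul_one]
  rw [this, map_mul, h1, show (piD K m) (C c) = C c from aeval_C _ _, C_mul_monomial, mul_one]

/-- the congruence relation modulo the ideal generated by `GD` -/
def Cong (K : Type*) [Field K] {m : ℕ} (a b : DVar m →₀ ℕ) : Prop :=
  (monomial a 1 - monomial b 1 : MvPolynomial (DVar m) K) ∈ Ideal.span (GD K m)

lemma Cong.refl (a : DVar m →₀ ℕ) : Cong K a a := by simp [Cong]

lemma Cong.symm {a b : DVar m →₀ ℕ} (h : Cong K a b) : Cong K b a := by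
  have := neg_mem h; rwa [neg_sub] at this

lemma Cong.trans {a b c : DVar m →₀ ℕ} (h1 : Cong K a b) (h2 : Cong K b c) : Cong K a c := by
  have := add_mem h1 h2; rwa [sub_add_sub_cancel] at this

lemma Cong.addLeft (c : DVar m →₀ ℕ) {a b : DVar m →₀ ℕ} (h : Cong K a b) :
    Cong K (c + a) (c + b) := by
  have := Ideal.mul_mem_left _ (monomial c 1) h
  rwa [mul_sub, monomial_mul, monomial_mul, one_mul] at this

end DTor
noncomputable section DTor2
open MvPolynomial Finsupp DVar

variable {K : Type*} [Field K] {m : ℕ}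

lemma two_single (j : ℕ) : (Finsupp.single j 2 : ℕ →₀ ℕ) = .single j 1 + .single j 1 := by
  rw [← Finsupp.single_add]

lemma EE_D2 (u v : DVar m) : EE (D2 u v) = ev u + ev v := by
  rw [D2, map_add, EE_single, EE_single, one_smul, one_smul]

lemma EE_D3 (u v w : DVar m) : EE (D3 u v w) = ev u + ev v + ev w := by
  rw [D3, map_add, map_add, EE_single, EE_single, EE_single, one_smul, one_smul, one_smul]

lemma ev_pvar {a b : Fin (m - 1)} (h : a ≠ b) :
    ev (pvar a b : DVar m) = .single (2 * a.val + 3) 1 + .single (2 * b.val + 3) 1 := by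
  rcases lt_or_gt_of_ne h with h1 | h1
  · simp [pvar, h1, ev]
  · simp [pvar, h1, dif_neg (lt_asymm h1), ev, add_comm]

lemma yw_pvar {a b : Fin (m - 1)} (h : a ≠ b) : yw (pvar a b : DVar m) = 0 := by
  rcases lt_or_gt_of_ne h with h1 | h1 <;>
    simp [pvar, h1, dif_neg (lt_asymm h1), yw]

lemma deg_D2 (u v : DVar m) : deg (D2 u v) = 2 := by
  rw [D2, deg_add, deg_single, deg_single]

lemma deg_D3 (u v w : DVar m) : deg (D3 u v w) = 3 := by
  rw [D3, deg_add, deg_add, deg_single, deg_single, deg_single]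

lemma ycount_D2 (u v : DVar m) : ycount (D2 u v) = yw u + yw v := by
  rw [D2, ycount_add, ycount_single, ycount_single, mul_one, mul_one]

lemma ycount_D3 (u v w : DVar m) : ycount (D3 u v w) = yw u + yw v + yw w := by
  rw [D3, ycount_add, ycount_add, ycount_single, ycount_single, ycount_single,
    mul_one, mul_one, mul_one]

/-! Generators as congruences. -/

lemma gA1 {i j k l : Fin (m - 1)} (hij : i < j) (hjk : j < k) (hkl : k < l) :
    Cong K (D2 (xP i k (hij.trans hjk)) (xP j l (hjk.trans hkl)))
      (D2 (xP i j hij) (xP k l hkl)) := by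
  unfold Cong; rw [← X_mul_X, ← X_mul_X]
  exact Ideal.subset_span (Or.inl ⟨i, j, k, l, hij, hjk, hkl, Or.inl rfl⟩)

lemma gA2 {i j k l : Fin (m - 1)} (hij : i < j) (hjk : j < k) (hkl : k < l) :
    Cong K (D2 (xP i l (hij.trans (hjk.trans hkl))) (xP j k hjk))
      (D2 (xP i j hij) (xP k l hkl)) := by
  unfold Cong; rw [← X_mul_X, ← X_mul_X]
  exact Ideal.subset_span (Or.inl ⟨i, j, k, l, hij, hjk, hkl, Or.inr rfl⟩)

lemma gB1 {i j k : Fin (m - 1)} (hij : i < j) (hjk : j < k) :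
    Cong K (D2 (xP i j hij) (xP i k (hij.trans hjk))) (D2 (xJ i) (xP j k hjk)) := by
  unfold Cong; rw [← X_mul_X, ← X_mul_X]
  exact Ideal.subset_span (Or.inr (Or.inl ⟨i, j, k, hij, hjk, Or.inl rfl⟩))

lemma gB2 {i j k : Fin (m - 1)} (hij : i < j) (hjk : j < k) :
    Cong K (D2 (xJ j) (xP i k (hij.trans hjk))) (D2 (xP i j hij) (xP j k hjk)) := by
  unfold Cong; rw [← X_mul_X, ← X_mul_X]
  exact Ideal.subset_span (Or.inr (Or.inl ⟨i, j, k, hij, hjk, Or.inr (Or.inl rfl)⟩))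

lemma gB3 {i j k : Fin (m - 1)} (hij : i < j) (hjk : j < k) :
    Cong K (D2 (xJ k) (xP i j hij)) (D2 (xP i k (hij.trans hjk)) (xP j k hjk)) := by
  unfold Cong; rw [← X_mul_X, ← X_mul_X]
  exact Ideal.subset_span (Or.inr (Or.inl ⟨i, j, k, hij, hjk, Or.inr (Or.inr (Or.inl rfl))⟩))

lemma gB4 {i j k : Fin (m - 1)} (hij : i < j) (hjk : j < k) :
    Cong K (D2 (xP j k hjk) (y i)) (D2 (xP i j hij) (y k)) := by
  unfold Cong; rw [← X_mul_X, ← X_mul_X]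
  exact Ideal.subset_span
    (Or.inr (Or.inl ⟨i, j, k, hij, hjk, Or.inr (Or.inr (Or.inr (Or.inl rfl)))⟩))

lemma gB5 {i j k : Fin (m - 1)} (hij : i < j) (hjk : j < k) :
    Cong K (D2 (xP i k (hij.trans hjk)) (y j)) (D2 (xP i j hij) (y k)) := by
  unfold Cong; rw [← X_mul_X, ← X_mul_X]
  exact Ideal.subset_span
    (Or.inr (Or.inl ⟨i, j, k, hij, hjk, Or.inr (Or.inr (Or.inr (Or.inr rfl)))⟩))

lemma gC1 {i j : Fin (m - 1)} (hij : i < j) :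
    Cong K (D2 (xJ i) (xJ j)) (D2 (xP i j hij) (xP i j hij)) := by
  unfold Cong; rw [← X_mul_X, ← X_sq]
  exact Ideal.subset_span (Or.inr (Or.inr (Or.inl ⟨i, j, hij, Or.inl rfl⟩)))

lemma gC2 {i j : Fin (m - 1)} (hij : i < j) :
    Cong K (D2 (xJ j) (y i)) (D2 (xP i j hij) (y j)) := by
  unfold Cong; rw [← X_mul_X, ← X_mul_X]
  exact Ideal.subset_span (Or.inr (Or.inr (Or.inl ⟨i, j, hij, Or.inr (Or.inl rfl)⟩)))

lemma gC3 {i j : Fin (m - 1)} (hij : i < j) :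
    Cong K (D2 (xP i j hij) (y i)) (D2 (xJ i) (y j)) := by
  unfold Cong; rw [← X_mul_X, ← X_mul_X]
  exact Ideal.subset_span (Or.inr (Or.inr (Or.inl ⟨i, j, hij, Or.inr (Or.inr (Or.inl rfl))⟩)))

lemma gC4 {i j : Fin (m - 1)} (hij : i < j) :
    Cong K (D3 (xP i j hij) x1 xn) (D2 (y i) (y j)) := by
  unfold Cong; rw [← X_mul_X, ← X_mul_X_mul_X]
  exact Ideal.subset_span
    (Or.inr (Or.inr (Or.inl ⟨i, j, hij, Or.inr (Or.inr (Or.inr rfl))⟩)))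

lemma gD1 (i : Fin (m - 1)) : Cong K (D3 (xJ i) x1 xn) (D2 (y i) (y i)) := by
  unfold Cong; rw [← X_sq, ← X_mul_X_mul_X]
  exact Ideal.subset_span (Or.inr (Or.inr (Or.inr ⟨i, rfl⟩)))

end DTor2
noncomputable section DTor3
open MvPolynomial Finsupp DVar

variable {K : Type*} [Field K] {m : ℕ}

lemma pvar_lt {a b : Fin (m - 1)} (h : a < b) : (pvar a b : DVar m) = xP a b h := by
  simp [pvar, h]

lemma pvar_gt {a b : Fin (m - 1)} (h : b < a) : (pvar a b : DVar m) = xP b a h := by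
  simp [pvar, dif_neg (lt_asymm h), h]

/-- squares: `x_a x_b ≡ x_{ab}²` -/
lemma L1 {a b : Fin (m - 1)} (h : a ≠ b) :
    Cong K (D2 (xJ a) (xJ b)) (D2 (pvar a b) (pvar a b)) := by
  rcases lt_or_gt_of_ne h with h1 | h1
  · rw [pvar_lt h1]; exact gC1 h1
  · rw [pvar_gt h1, D2_comm (xJ a)]; exact gC1 h1

/-- `x_a x_{cd} ≡ x_{ac} x_{ad}` -/
lemma L2 {a c d : Fin (m - 1)} (hcd : c ≠ d) (hac : a ≠ c) (had : a ≠ d) :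
    Cong K (D2 (xJ a) (pvar c d)) (D2 (pvar a c) (pvar a d)) := by
  have aux : ∀ c d : Fin (m - 1), c < d → a ≠ c → a ≠ d →
      Cong K (D2 (xJ a) (pvar c d)) (D2 (pvar a c) (pvar a d)) := by
    intro c d hcd hac had
    rcases lt_or_gt_of_ne hac with h1 | h1
    · rw [pvar_lt hcd, pvar_lt h1, pvar_lt (h1.trans hcd)]
      exact (gB1 h1 hcd).symm
    · rcases lt_or_gt_of_ne had with h2 | h2
      · rw [pvar_lt hcd, pvar_gt h1, pvar_lt h2]
        exact gB2 h1 h2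
      · rw [pvar_lt hcd, pvar_gt h1, pvar_gt h2]
        exact gB3 hcd h2
  rcases lt_or_gt_of_ne hcd with h1 | h1
  · exact aux c d h1 hac had
  · rw [pvar_comm hcd, D2_comm (pvar a c)]; exact aux d c h1 had hac

/-- quadrilateral exchange: `x_{ab} x_{cd} ≡ x_{ac} x_{bd}` for distinct indices -/
lemma L3 {a b c d : Fin (m - 1)} (hab : a ≠ b) (hcd : c ≠ d) (hac : a ≠ c) (had : a ≠ d)
    (hbc : b ≠ c) (hbd : b ≠ d) :
    Cong K (D2 (pvar a b) (pvar c d)) (D2 (pvar a c) (pvar b d)) := by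
  have H : ∀ p q r s : Fin (m - 1), p < q → p < r → p < s → q ≠ r → q ≠ s → r ≠ s →
      Cong K (D2 (pvar p q) (pvar r s)) (D2 (pvar p r) (pvar q s)) := by
    intro p q r s hpq hpr hps hqr hqs hrs
    rcases lt_or_gt_of_ne hqr with h1 | h1
    · rcases lt_or_gt_of_ne hrs with h2 | h2
      · rw [pvar_lt hpq, pvar_lt h2, pvar_lt hpr, pvar_lt (h1.trans h2)]
        exact (gA1 hpq h1 h2).symm
      · rcases lt_or_gt_of_ne hqs with h3 | h3
        · rw [pvar_lt hpq, pvar_gt h2, pvar_lt hpr, pvar_lt h3]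
          exact (gA2 hpq h3 h2).symm
        · rw [pvar_lt hpq, pvar_gt h2, pvar_lt hpr, pvar_gt h3]
          exact (gA1 hps h3 h1).trans (gA2 hps h3 h1).symm
    · rcases lt_or_gt_of_ne hqs with h2 | h2
      · rw [pvar_lt hpq, pvar_lt (h1.trans h2), pvar_lt hpr, pvar_lt h2]
        exact gA1 hpr h1 h2
      · rcases lt_or_gt_of_ne hrs with h3 | h3
        · rw [pvar_lt hpq, pvar_lt h3, pvar_lt hpr, pvar_gt h2]
          exact gA2 hpr h3 h2
        · rw [pvar_lt hpq, pvar_gt h3, pvar_lt hpr, pvar_gt h2]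
          exact (gA2 hps h3 h1).trans (gA1 hps h3 h1).symm
  have mina : a < b → a < c → a < d →
      Cong K (D2 (pvar a b) (pvar c d)) (D2 (pvar a c) (pvar b d)) := fun h1 h2 h3 =>
    H a b c d h1 h2 h3 hbc hbd hcd
  have minb : b < a → b < c → b < d →
      Cong K (D2 (pvar a b) (pvar c d)) (D2 (pvar a c) (pvar b d)) := by
    intro h1 h2 h3
    have h := H b a d c h1 h3 h2 had hac hcd.symm
    rw [pvar_comm hab.symm, pvar_comm hcd.symm, D2_comm (pvar b d)] at h
    exact h
  have minc : c < a → c < b → c < d →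
      Cong K (D2 (pvar a b) (pvar c d)) (D2 (pvar a c) (pvar b d)) := by
    intro h1 h2 h3
    have h := H c d a b h3 h1 h2 had.symm hbd.symm hab
    rw [D2_comm (pvar c d), pvar_comm hac.symm, pvar_comm hbd.symm] at h
    exact h
  have mind : d < a → d < b → d < c →
      Cong K (D2 (pvar a b) (pvar c d)) (D2 (pvar a c) (pvar b d)) := by
    intro h1 h2 h3
    have h := H d c b a h3 h2 h1 hbc.symm hac.symm hab.symm
    rw [D2_comm (pvar d c), pvar_comm hab.symm, pvar_comm hcd.symm,
      pvar_comm hbd.symm, pvar_comm hac.symm, D2_comm (pvar b d)] at h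
    exact h
  rcases lt_or_gt_of_ne hab with hab' | hab'
  · rcases lt_or_gt_of_ne hcd with hcd' | hcd'
    · rcases lt_or_gt_of_ne hac with hac' | hac'
      · exact mina hab' hac' (hac'.trans hcd')
      · exact minc (show c < a from hac') ((show c < a from hac').trans hab') hcd'
    · rcases lt_or_gt_of_ne had with had' | had'
      · exact mina hab' (had'.trans (show d < c from hcd')) had'
      · exact mind (show d < a from had') ((show d < a from had').trans hab') (show d < c from hcd')
  · rcases lt_or_gt_of_ne hcd with hcd' | hcd'
    · rcases lt_or_gt_of_ne hbc with hbc' | hbc'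
      · exact minb (show b < a from hab') hbc' (hbc'.trans hcd')
      · exact minc ((show c < b from hbc').trans (show b < a from hab')) (show c < b from hbc') hcd'
    · rcases lt_or_gt_of_ne hbd with hbd' | hbd'
      · exact minb (show b < a from hab') (hbd'.trans (show d < c from hcd')) hbd'
      · exact mind ((show d < b from hbd').trans (show b < a from hab')) (show d < b from hbd') (show d < c from hcd')

/-- `x_a y_b ≡ x_{ab} y_a` -/
lemma L4 {a b : Fin (m - 1)} (h : a ≠ b) :
    Cong K (D2 (xJ a) (y b)) (D2 (pvar a b) (y a)) := by
  rcases lt_or_gt_of_ne h with h1 | h1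
  · rw [pvar_lt h1]; exact (gC3 h1).symm
  · rw [pvar_gt h1]; exact gC2 h1

/-- move the `y`-index into a pair: `x_{ab} y_c ≡ x_{cb} y_a` -/
lemma L6 {a b c : Fin (m - 1)} (hab : a ≠ b) (hbc : b ≠ c) (hac : a ≠ c) :
    Cong K (D2 (pvar a b) (y c)) (D2 (pvar c b) (y a)) := by
  rcases lt_or_gt_of_ne hab with h1 | h1
  · rcases lt_or_gt_of_ne hbc with h2 | h2
    · rw [pvar_lt h1, pvar_gt h2]
      exact (gB4 h1 h2).symm
    · rcases lt_or_gt_of_ne hac with h3 | h3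
      · rw [pvar_lt h1, pvar_lt h2]
        exact (gB5 h3 h2).trans (gB4 h3 h2).symm
      · rw [pvar_lt h1, pvar_lt h2]
        exact (gB4 h3 h1).trans (gB5 h3 h1).symm
  · rcases lt_or_gt_of_ne hac with h3 | h3
    · rw [pvar_gt h1, pvar_gt (h1.trans h3)]
      exact (gB5 h1 h3).symm
    · rcases lt_or_gt_of_ne hbc with h2 | h2
      · rw [pvar_gt h1, pvar_gt h2]
        exact gB5 h2 h3
      · rw [pvar_gt h1, pvar_lt h2]
        exact gB4 h2 h1
  
/-- `y_a y_b ≡ x_{ab} x_1 x_n` -/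
lemma L7 {a b : Fin (m - 1)} (h : a ≠ b) :
    Cong K (D2 (y a) (y b)) (D3 (pvar a b) x1 xn) := by
  rcases lt_or_gt_of_ne h with h1 | h1
  · rw [pvar_lt h1]; exact (gC4 h1).symm
  · rw [pvar_gt h1, D2_comm (y a)]; exact (gC4 h1).symm

lemma L8 (a : Fin (m - 1)) : Cong K (D2 (y a) (y a)) (D3 (xJ a) x1 xn) := (gD1 a).symm

end DTor3
noncomputable section DTor4
open MvPolynomial Finsupp DVar

variable {K : Type*} [Field K] {m : ℕ}

lemma EE_eq_sum (a : DVar m →₀ ℕ) : EE a = a.sum fun v n => n • ev v :=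
  Finsupp.linearCombination_apply _ _

lemma EE_apply (a : DVar m →₀ ℕ) (j : ℕ) :
    EE a j = a.sum fun v n => n * ev v j := by
  rw [EE_eq_sum, Finsupp.sum_apply]
  exact Finset.sum_congr rfl fun v _ => by simp

/-- the `x1`-indicator weight -/
def x1w : DVar m → ℕ | .x1 => 1 | _ => 0
def xnw : DVar m → ℕ | .xn => 1 | _ => 0

lemma ev_at_one (v : DVar m) : ev v 1 = 2 * x1w v + yw v := by
  cases v <;> simp [ev, x1w, yw, Finsupp.single_apply] <;> omega

lemma ev_at_2m (v : DVar m) : ev v (2 * m) = 2 * xnw v + yw v := by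
  cases v with
  | xJc t => have := t.isLt; simp [ev, xnw, yw, Finsupp.single_apply]; omega
  | _ => simp [ev, xnw, yw, Finsupp.single_apply] <;> omega

lemma ev_at_even (t : Fin (m - 1)) (v : DVar m) :
    ev v (2 * t.val + 2) = if v = .xJc t then 1 else 0 := by
  have := t.isLt
  cases v with
  | xJc s =>
    rcases eq_or_ne s t with h | h
    · subst h; simp [ev, Finsupp.single_apply]
    · have : s.val ≠ t.val := fun hh => h (Fin.ext hh)
      simp [ev, Finsupp.single_apply, h]
      omega
  | _ => simp [ev, Finsupp.single_apply] <;> omega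

lemma coord_one (a : DVar m →₀ ℕ) : EE a 1 = 2 * a .x1 + ycount a := by
  rw [EE_apply]
  induction a using Finsupp.induction with
  | zero => simp [ycount]
  | single_add v n a hv hn ih =>
    rw [Finsupp.sum_add_index (by simp) (by intros; rw [add_mul]),
      Finsupp.sum_single_index (by simp), ih, ycount_add, ycount_single,
      Finsupp.add_apply, ev_at_one]
    cases v <;> simp [x1w, yw, Finsupp.single_apply] <;> ring

lemma coord_2m (a : DVar m →₀ ℕ) : EE a (2 * m) = 2 * a .xn + ycount a := by
  rw [EE_apply]
  induction a using Finsupp.induction with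
  | zero => simp [ycount]
  | single_add v n a hv hn ih =>
    rw [Finsupp.sum_add_index (by simp) (by intros; rw [add_mul]),
      Finsupp.sum_single_index (by simp), ih, ycount_add, ycount_single,
      Finsupp.add_apply, ev_at_2m]
    cases v <;> simp [xnw, yw, Finsupp.single_apply] <;> ring

lemma coord_even (a : DVar m →₀ ℕ) (t : Fin (m - 1)) :
    EE a (2 * t.val + 2) = a (.xJc t) := by
  rw [EE_apply]
  induction a using Finsupp.induction with
  | zero => simp
  | single_add v n a hv hn ih =>
    rw [Finsupp.sum_add_index (by simp) (by intros; rw [add_mul]),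
      Finsupp.sum_single_index (by simp), ih, Finsupp.add_apply, ev_at_even]
    rcases eq_or_ne v (.xJc t) with h | h <;> simp [h, Finsupp.single_apply]

lemma deg_eq_zero {a : DVar m →₀ ℕ} (h : deg a = 0) : a = 0 := by
  ext v
  rcases eq_or_ne (a v) 0 with h1 | h1
  · simp [h1]
  · exfalso
    have hv : v ∈ a.support := Finsupp.mem_support_iff.2 h1
    have : a v ≤ deg a := Finset.single_le_sum (f := fun v => a v) (fun _ _ => Nat.zero_le _) hv
    omega

lemma term_le_EE (a : DVar m →₀ ℕ) (v : DVar m) (j : ℕ) : a v * ev v j ≤ EE a j := by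
  rcases eq_or_ne (a v) 0 with h | h
  · simp [h]
  · rw [EE_apply]
    exact Finset.single_le_sum (f := fun w => a w * ev w j) (fun _ _ => Nat.zero_le _)
      (Finsupp.mem_support_iff.2 h)

lemma yterm_le_ycount (a : DVar m →₀ ℕ) (t : Fin (m - 1)) : a (.y t) ≤ ycount a := by
  rcases eq_or_ne (a (.y t)) 0 with h | h
  · simp [h]
  · have hm : (DVar.y t) ∈ a.support := Finsupp.mem_support_iff.2 h
    have h2 := Finset.single_le_sum (f := fun v => yw v * a v) (fun _ _ => Nat.zero_le _) hm
    unfold ycount Finsupp.sum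
    simpa [yw] using h2

lemma exists_cover {b : DVar m →₀ ℕ} {j : ℕ} (h : EE b j ≠ 0) :
    ∃ v, b v ≠ 0 ∧ ev v j ≠ 0 := by
  by_contra hc
  push_neg at hc
  apply h
  rw [EE_apply, Finsupp.sum]
  apply Finset.sum_eq_zero
  intro v hv
  rcases eq_or_ne (b v) 0 with h1 | h1
  · simp [h1]
  · simp [hc v h1]

lemma two_from_sum {α : Type*} {s : Finset α} {f : α → ℕ} (h : 2 ≤ ∑ i ∈ s, f i) :
    (∃ i ∈ s, 2 ≤ f i) ∨ ∃ i ∈ s, ∃ j ∈ s, i ≠ j ∧ 1 ≤ f i ∧ 1 ≤ f j := by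
  classical
  revert h
  induction s using Finset.induction_on with
  | empty => intro h; simp at h
  | insert _ _ ha ih =>
    rename_i a s
    intro h
    rw [Finset.sum_insert ha] at h
    rcases Nat.lt_or_ge (f a) 1 with h1 | h1
    · have h2 : 2 ≤ ∑ i ∈ s, f i := by omega
      rcases ih h2 with ⟨i, hi, h3⟩ | ⟨i, hi, j, hj, h3⟩
      · exact Or.inl ⟨i, Finset.mem_insert_of_mem hi, h3⟩
      · exact Or.inr ⟨i, Finset.mem_insert_of_mem hi, j, Finset.mem_insert_of_mem hj, h3⟩
    · rcases Nat.lt_or_ge (f a) 2 with h2 | h2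
      · have h3 : ∑ i ∈ s, f i ≠ 0 := by omega
        obtain ⟨i, hi, h4⟩ := Finset.exists_ne_zero_of_sum_ne_zero h3
        refine Or.inr ⟨a, Finset.mem_insert_self _ _, i, Finset.mem_insert_of_mem hi,
          fun he => ha (he ▸ hi), h1, by omega⟩
      · exact Or.inl ⟨a, Finset.mem_insert_self _ _, h2⟩

lemma cover_two {b : DVar m →₀ ℕ} {j : ℕ} (h : 2 ≤ EE b j) :
    (∃ v, b v ≠ 0 ∧ 2 ≤ ev v j) ∨ (∃ v, 2 ≤ b v ∧ 1 ≤ ev v j) ∨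
      (∃ v w, v ≠ w ∧ b v ≠ 0 ∧ b w ≠ 0 ∧ 1 ≤ ev v j ∧ 1 ≤ ev w j) := by
  rw [EE_apply] at h
  rcases two_from_sum h with ⟨v, hv, h1⟩ | ⟨v, hv, w, hw, hvw, h1, h2⟩
  · have hb := Finsupp.mem_support_iff.1 hv
    rcases Nat.lt_or_ge (ev v j) 2 with h2 | h2
    · refine Or.inr (Or.inl ⟨v, ?_, ?_⟩) <;> nlinarith [Nat.one_le_iff_ne_zero.2 hb]
    · exact Or.inl ⟨v, hb, h2⟩
  · exact Or.inr (Or.inr ⟨v, w, hvw, Finsupp.mem_support_iff.1 hv, Finsupp.mem_support_iff.1 hw,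
      Nat.one_le_iff_ne_zero.2 fun he => by simp [he] at h1,
      Nat.one_le_iff_ne_zero.2 fun he => by simp [he] at h2⟩)

/-- classification of variables covering an odd coordinate -/
lemma cover_classify {i : Fin (m - 1)} {w : DVar m} (h : ev w (2 * i.val + 3) ≠ 0) :
    w = .xJ i ∨ w = .y i ∨ ∃ o, o ≠ i ∧ w = pvar i o := by
  cases w with
  | x1 =>
    exfalso
    simp only [ev, Finsupp.single_apply] at h
    split_ifs at h with hh
    · omega
    · exact h rfl
  | xn =>
    exfalso
    simp only [ev, Finsupp.single_apply] at h
    split_ifs at h with hh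
    · omega
    · exact h rfl
  | xJc s =>
    exfalso
    simp only [ev, Finsupp.single_apply] at h
    split_ifs at h with hh
    · omega
    · exact h rfl
  | xJ s =>
    left
    simp only [ev, Finsupp.single_apply] at h
    split_ifs at h with hh
    · exact congrArg DVar.xJ (Fin.ext (by omega))
    · exact absurd rfl h
  | y s =>
    right; left
    simp only [ev, Finsupp.add_apply, Finsupp.single_apply] at h
    split_ifs at h <;>
      first
        | omega
        | exact congrArg DVar.y (Fin.ext (by omega))
        | exact absurd rfl h
  | xP s t hst =>
    right; right
    have hst' : s.val < t.val := hst
    simp only [ev, Finsupp.add_apply, Finsupp.single_apply] at h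
    split_ifs at h with h1 h2 h2
    · omega
    · have hs : s = i := Fin.ext (by omega)
      subst hs
      exact ⟨t, fun he => absurd hst (by simp [he]), (xP_eq_pvar hst)⟩
    · have ht : t = i := Fin.ext (by omega)
      subst ht
      refine ⟨s, fun he => absurd hst (by simp [he]), ?_⟩
      rw [xP_eq_pvar hst, pvar_comm (ne_of_lt hst)]
    · exact absurd rfl h

/-- only `xJ i` covers an odd coordinate twice -/
lemma cover_two_classify {i : Fin (m - 1)} {w : DVar m} (h : 2 ≤ ev w (2 * i.val + 3)) :
    w = .xJ i := by
  cases w with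
  | x1 =>
    exfalso; simp only [ev, Finsupp.single_apply] at h; split_ifs at h <;> omega
  | xn =>
    exfalso; simp only [ev, Finsupp.single_apply] at h; split_ifs at h <;> omega
  | xJc s =>
    exfalso; simp only [ev, Finsupp.single_apply] at h; split_ifs at h <;> omega
  | xJ s =>
    simp only [ev, Finsupp.single_apply] at h
    split_ifs at h with hh
    · exact congrArg DVar.xJ (Fin.ext (by omega))
    · omega
  | y s =>
    exfalso
    simp only [ev, Finsupp.add_apply, Finsupp.single_apply] at h
    split_ifs at h <;> omega
  | xP s t hst =>
    exfalso
    have hst' : s.val < t.val := hst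
    simp only [ev, Finsupp.add_apply, Finsupp.single_apply] at h
    split_ifs at h <;> omega

lemma ev_ne_zero (v : DVar m) : ∃ j, ev v j ≠ 0 := by
  cases v with
  | x1 => exact ⟨1, by simp [ev, Finsupp.single_apply]⟩
  | xn => exact ⟨2 * m, by simp [ev, Finsupp.single_apply]⟩
  | xJ t => exact ⟨2 * t.val + 3, by simp [ev, Finsupp.single_apply]⟩
  | xJc t => exact ⟨2 * t.val + 2, by simp [ev, Finsupp.single_apply]⟩
  | xP s t h => refine ⟨2 * s.val + 3, ?_⟩
                simp only [ev, Finsupp.add_apply, Finsupp.single_apply]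
                split_ifs <;> omega
  | y t => refine ⟨1, ?_⟩
           simp only [ev, Finsupp.add_apply, Finsupp.single_apply]
           split_ifs <;> omega

/-- decompositions -/
lemma exists_decomp_single {b : DVar m →₀ ℕ} {v : DVar m} (h : b v ≠ 0) :
    ∃ r, b = Finsupp.single v 1 + r := by
  refine ⟨b - Finsupp.single v 1, ?_⟩
  rw [add_comm, tsub_add_cancel_of_le ?_]
  rw [Finsupp.single_le_iff]
  omega

lemma exists_decomp_D2 {b : DVar m →₀ ℕ} {u w : DVar m} (hu : b u ≠ 0) (hw : b w ≠ 0)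
    (huw : u ≠ w) : ∃ r, b = D2 u w + r := by
  refine ⟨b - D2 u w, ?_⟩
  rw [add_comm, tsub_add_cancel_of_le ?_]
  rw [Finsupp.le_def]
  intro x
  rcases eq_or_ne x u with h | h
  · subst h; simp [D2, Finsupp.single_apply, Ne.symm huw]; omega
  rcases eq_or_ne x w with h2 | h2
  · subst h2; simp [D2, Finsupp.single_apply, Ne.symm huw, Ne.symm h]; omega
  · simp [D2, Finsupp.single_apply, Ne.symm h, Ne.symm h2]

lemma exists_decomp_sq {b : DVar m →₀ ℕ} {v : DVar m} (h : 2 ≤ b v) :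
    ∃ r, b = D2 v v + r := by
  refine ⟨b - D2 v v, ?_⟩
  rw [add_comm, tsub_add_cancel_of_le ?_]
  rw [Finsupp.le_def]
  intro x
  rcases eq_or_ne x v with h1 | h1
  · subst h1; simp [D2, Finsupp.single_apply]; omega
  · simp [D2, Finsupp.single_apply, Ne.symm h1]

lemma D2_add_apply_ne_zero (u w : DVar m) (r : DVar m →₀ ℕ) : (D2 u w + r) w ≠ 0 := by
  simp [D2, Finsupp.single_apply]

lemma D2_add_apply_ne_zero' (u w : DVar m) (r : DVar m →₀ ℕ) : (D2 u w + r) u ≠ 0 := by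
  simp [D2, Finsupp.single_apply]

end DTor4
noncomputable section DTor5
open MvPolynomial Finsupp DVar

variable {K : Type*} [Field K] {m : ℕ}

lemma Cong.addRight (c : DVar m →₀ ℕ) {a b : DVar m →₀ ℕ} (h : Cong K a b) :
    Cong K (a + c) (b + c) := by
  rw [add_comm a c, add_comm b c]; exact Cong.addLeft c h

lemma E_L1 {a b : Fin (m - 1)} (h : a ≠ b) :
    EE (D2 (xJ a : DVar m) (xJ b)) = EE (D2 (pvar a b) (pvar a b)) := by
  rw [EE_D2, EE_D2, ev_pvar h]
  simp only [ev, two_single]; abel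

lemma E_L2 {a c d : Fin (m - 1)} (hcd : c ≠ d) (hac : a ≠ c) (had : a ≠ d) :
    EE (D2 (xJ a : DVar m) (pvar c d)) = EE (D2 (pvar a c) (pvar a d)) := by
  rw [EE_D2, EE_D2, ev_pvar hcd, ev_pvar hac, ev_pvar had]
  simp only [ev, two_single]; abel

lemma E_L3 {a b c d : Fin (m - 1)} (hab : a ≠ b) (hcd : c ≠ d) (hac : a ≠ c) (hbd : b ≠ d) :
    EE (D2 (pvar a b : DVar m) (pvar c d)) = EE (D2 (pvar a c) (pvar b d)) := by
  rw [EE_D2, EE_D2, ev_pvar hab, ev_pvar hcd, ev_pvar hac, ev_pvar hbd]; abel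

lemma E_L4 {a b : Fin (m - 1)} (h : a ≠ b) :
    EE (D2 (xJ a : DVar m) (y b)) = EE (D2 (pvar a b) (y a)) := by
  rw [EE_D2, EE_D2, ev_pvar h]
  simp only [ev, two_single]; abel

lemma E_L6 {a b c : Fin (m - 1)} (hab : a ≠ b) (hbc : b ≠ c) (hac : a ≠ c) :
    EE (D2 (pvar a b : DVar m) (y c)) = EE (D2 (pvar c b) (y a)) := by
  rw [EE_D2, EE_D2, ev_pvar hab, ev_pvar (Ne.symm hbc)]
  simp only [ev]; abel

lemma E_L7 {a b : Fin (m - 1)} (h : a ≠ b) :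
    EE (D2 (y a : DVar m) (y b)) = EE (D3 (pvar a b) x1 xn) := by
  rw [EE_D2, EE_D3, ev_pvar h]
  simp only [ev, two_single]; abel

lemma E_L8 (a : Fin (m - 1)) :
    EE (D2 (y a : DVar m) (y a)) = EE (D3 (xJ a) x1 xn) := by
  rw [EE_D2, EE_D3]
  simp only [ev, two_single]; abel

lemma pvar_ne_y {a b : Fin (m - 1)} (h : a ≠ b) (t : Fin (m - 1)) :
    (pvar a b : DVar m) ≠ .y t := by
  rcases lt_or_gt_of_ne h with h1 | h1
  · rw [pvar_lt h1]; simp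
  · rw [pvar_gt h1]; simp

lemma pvar_ne_xJ {a b : Fin (m - 1)} (h : a ≠ b) (t : Fin (m - 1)) :
    (pvar a b : DVar m) ≠ .xJ t := by
  rcases lt_or_gt_of_ne h with h1 | h1
  · rw [pvar_lt h1]; simp
  · rw [pvar_gt h1]; simp

lemma pvar_inj {a b c d : Fin (m - 1)} (hab : a ≠ b) (hcd : c ≠ d)
    (he : (pvar a b : DVar m) = pvar c d) : (a = c ∧ b = d) ∨ (a = d ∧ b = c) := by
  rcases lt_or_gt_of_ne hab with h1 | h1 <;> rcases lt_or_gt_of_ne hcd with h2 | h2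
  · rw [pvar_lt h1, pvar_lt h2] at he
    simp only [DVar.xP.injEq] at he
    exact Or.inl ⟨he.1, he.2⟩
  · rw [pvar_lt h1, pvar_gt h2] at he
    simp only [DVar.xP.injEq] at he
    exact Or.inr ⟨he.1, he.2⟩
  · rw [pvar_gt h1, pvar_lt h2] at he
    simp only [DVar.xP.injEq] at he
    exact Or.inr ⟨he.2, he.1⟩
  · rw [pvar_gt h1, pvar_gt h2] at he
    simp only [DVar.xP.injEq] at he
    exact Or.inl ⟨he.2, he.1⟩

lemma yc_one {b : DVar m →₀ ℕ} (h : ycount b ≠ 0) : ∃ t, b (.y t) ≠ 0 := by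
  unfold ycount Finsupp.sum at h
  obtain ⟨v, hv, h1⟩ := Finset.exists_ne_zero_of_sum_ne_zero h
  cases v with
  | y t => exact ⟨t, Finsupp.mem_support_iff.1 hv⟩
  | _ => simp [yw] at h1

lemma yc_two {b : DVar m →₀ ℕ} (h : 2 ≤ ycount b) :
    (∃ t, 2 ≤ b (.y t)) ∨ ∃ t t', t ≠ t' ∧ b (.y t) ≠ 0 ∧ b (.y t') ≠ 0 := by
  unfold ycount Finsupp.sum at h
  rcases two_from_sum h with ⟨v, hv, h1⟩ | ⟨v, hv, w, hw, hvw, h1, h2⟩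
  · cases v with
    | y t => exact Or.inl ⟨t, by simpa [yw] using h1⟩
    | _ => simp [yw] at h1 <;> omega
  · cases v with
    | y t =>
      cases w with
      | y t' =>
        refine Or.inr ⟨t, t', fun he => hvw (congrArg DVar.y he),
          Finsupp.mem_support_iff.1 hv, Finsupp.mem_support_iff.1 hw⟩
      | _ => simp [yw] at h2 <;> omega
    | _ => simp [yw] at h1 <;> omega

lemma ev_y_self (i : Fin (m - 1)) : ev (DVar.y i : DVar m) (2 * i.val + 3) = 1 := by
  simp only [ev, Finsupp.add_apply, Finsupp.single_apply]
  split_ifs <;> omega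

lemma ev_xJ_self (i : Fin (m - 1)) : ev (DVar.xJ i : DVar m) (2 * i.val + 3) = 2 := by
  simp [ev, Finsupp.single_apply]

lemma ev_xP_fst {i k : Fin (m - 1)} (hik : i < k) :
    ev (DVar.xP i k hik : DVar m) (2 * i.val + 3) = 1 := by
  have : i.val < k.val := hik
  simp only [ev, Finsupp.add_apply, Finsupp.single_apply]
  split_ifs <;> omega

lemma ev_xP_snd {i k : Fin (m - 1)} (hik : i < k) :
    ev (DVar.xP i k hik : DVar m) (2 * k.val + 3) = 1 := by
  have : i.val < k.val := hik
  simp only [ev, Finsupp.add_apply, Finsupp.single_apply]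
  split_ifs <;> omega

end DTor5
noncomputable section DTor6
open MvPolynomial Finsupp DVar

variable {K : Type*} [Field K] {m : ℕ}

lemma cong_of_EE : ∀ (N : ℕ) (a b : DVar m →₀ ℕ),
    3 * (ycount a + ycount b) + (deg a + deg b) ≤ N → EE a = EE b → Cong K a b := by
  intro N
  induction N with
  | zero =>
    intro a b hμ _
    rw [deg_eq_zero (by omega : deg a = 0), deg_eq_zero (by omega : deg b = 0)]
    exact Cong.refl 0
  | succ N ih =>
    have strip : ∀ a b : DVar m →₀ ℕ,
        3 * (ycount a + ycount b) + (deg a + deg b) ≤ N + 1 → EE a = EE b →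
        ∀ v : DVar m, a v ≠ 0 → b v ≠ 0 → Cong K a b := by
      intro a b hμ hE v hav hbv
      obtain ⟨r, hr⟩ := exists_decomp_single hav
      obtain ⟨s, hs⟩ := exists_decomp_single hbv
      have hE' : EE r = EE s := by
        have h2 : EE (Finsupp.single v 1) + EE r = EE (Finsupp.single v 1) + EE s := by
          rw [← map_add, ← map_add, ← hr, ← hs]; exact hE
        exact add_left_cancel h2
      have hda : deg a = 1 + deg r := by rw [hr, deg_add, deg_single]
      have hdb : deg b = 1 + deg s := by rw [hs, deg_add, deg_single]
      have hya : ycount a = yw v + ycount r := by rw [hr, ycount_add, ycount_single, mul_one]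
      have hyb : ycount b = yw v + ycount s := by rw [hs, ycount_add, ycount_single, mul_one]
      rw [hr, hs]
      exact Cong.addLeft _ (ih r s (by omega) hE')
    intro a b hμ hE
    by_cases hsh : ∃ v : DVar m, a v ≠ 0 ∧ b v ≠ 0
    · obtain ⟨v, h1, h2⟩ := hsh
      exact strip a b hμ hE v h1 h2
    push_neg at hsh
    have hzero : ∀ c d : DVar m →₀ ℕ, EE c = EE d → c = 0 → d = 0 := by
      intro c d hcd hc
      by_contra hd
      obtain ⟨v, hv⟩ := Finsupp.support_nonempty_iff.2 hd
      have hdv := Finsupp.mem_support_iff.1 hv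
      obtain ⟨j, hj⟩ := ev_ne_zero v
      have h1 : d v * ev v j ≤ EE d j := term_le_EE d v j
      have h2 : EE d j = 0 := by rw [← hcd, hc]; simp
      have h3 := Nat.mul_le_mul (Nat.one_le_iff_ne_zero.2 hdv) (Nat.one_le_iff_ne_zero.2 hj)
      omega
    by_cases ha0 : a = 0
    · rw [ha0, hzero a b hE ha0]
      exact Cong.refl 0
    by_cases hb0 : b = 0
    · exact absurd (hzero b a hE.symm hb0) ha0
    have yred : ∀ c : DVar m →₀ ℕ, 2 ≤ ycount c → ∃ c₂, Cong K c c₂ ∧ EE c₂ = EE c ∧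
        ycount c₂ + 2 = ycount c ∧ deg c₂ = deg c + 1 := by
      intro c hc2
      rcases yc_two hc2 with ⟨t, ht⟩ | ⟨t, t', htt', h1, h2⟩
      · obtain ⟨r, hr⟩ := exists_decomp_sq ht
        refine ⟨D3 (.xJ t) .x1 .xn + r, ?_, ?_, ?_, ?_⟩
        · rw [hr]; exact Cong.addRight r (L8 t)
        · rw [hr, map_add, map_add, E_L8 t]
        · rw [hr, ycount_add, ycount_add, ycount_D2, ycount_D3]
          simp [yw]; omega
        · rw [hr, deg_add, deg_add, deg_D2, deg_D3]; omega
      · have hne : (DVar.y t) ≠ (DVar.y t') := fun he => htt' (by injection he)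
        obtain ⟨r, hr⟩ := exists_decomp_D2 h1 h2 hne
        refine ⟨D3 (pvar t t') .x1 .xn + r, ?_, ?_, ?_, ?_⟩
        · rw [hr]; exact Cong.addRight r (L7 htt')
        · rw [hr, map_add, map_add, E_L7 htt']
        · rw [hr, ycount_add, ycount_add, ycount_D2, ycount_D3, yw_pvar htt']
          simp [yw]; omega
        · rw [hr, deg_add, deg_add, deg_D2, deg_D3]; omega
    by_cases hya2 : 2 ≤ ycount a
    · obtain ⟨a₂, hc, hE2, hy2, hd2⟩ := yred a hya2
      exact hc.trans (ih a₂ b (by omega) (hE2.trans hE))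
    by_cases hyb2 : 2 ≤ ycount b
    · obtain ⟨b₂, hc, hE2, hy2, hd2⟩ := yred b hyb2
      exact (ih a b₂ (by omega) (hE.trans hE2.symm)).trans hc.symm
    obtain ⟨v, hvsup⟩ := Finsupp.support_nonempty_iff.2 ha0
    have hav := Finsupp.mem_support_iff.1 hvsup
    have hbv : b v = 0 := hsh v hav
    have conclude : ∀ (v : DVar m) (b₂ : DVar m →₀ ℕ), a v ≠ 0 → Cong K b₂ b →
        EE b₂ = EE b → ycount b₂ = ycount b → deg b₂ = deg b → b₂ v ≠ 0 → Cong K a b := by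
      intro v b₂ hav hcb hEb hycb hdb hbv2
      exact (strip a b₂ (by omega) (hE.trans hEb.symm) v hav hbv2).trans hcb
    clear hvsup
    cases v with
    | x1 =>
      exfalso
      have h1 := coord_one (m := m) a
      have h2 := coord_one (m := m) b
      rw [hE] at h1
      omega
    | xn =>
      exfalso
      have h1 := coord_2m (m := m) a
      have h2 := coord_2m (m := m) b
      rw [hE] at h1
      omega
    | xJc t =>
      exfalso
      have h1 := coord_even a t
      have h2 := coord_even b t
      rw [hE] at h1
      omega
    | y i =>
      have hycb1 : ycount b ≠ 0 := by
        have h1 := coord_one (m := m) a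
        have h2 := coord_one (m := m) b
        rw [hE] at h1
        have h3 : a (.y i) ≤ ycount a := yterm_le_ycount a i
        omega
      obtain ⟨t, hbt⟩ := yc_one hycb1
      have hti : t ≠ i := fun he => hbt (by rw [he]; exact hbv)
      have hcov : EE b (2 * i.val + 3) ≠ 0 := by
        rw [← hE]
        have h1 := term_le_EE a (.y i) (2 * i.val + 3)
        rw [ev_y_self] at h1
        omega
      obtain ⟨w, hbw, hevw⟩ := exists_cover hcov
      rcases cover_classify hevw with hw | hw | ⟨o, hoi, hw⟩
      · subst hw
        obtain ⟨r, hr⟩ := exists_decomp_D2 hbw hbt (by simp)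
        refine conclude (.y i) (D2 (pvar i t) (.y i) + r) hav ?_ ?_ ?_ ?_ ?_
        · rw [hr]; exact Cong.addRight r (L4 (Ne.symm hti)).symm
        · rw [hr, map_add, map_add, E_L4 (Ne.symm hti)]
        · rw [hr, ycount_add, ycount_add, ycount_D2, ycount_D2, yw_pvar (Ne.symm hti)]
          simp [yw]
        · rw [hr, deg_add, deg_add, deg_D2, deg_D2]
        · exact D2_add_apply_ne_zero _ _ r
      · subst hw; exact absurd hbv hbw
      · subst hw
        rcases eq_or_ne t o with hto | hto
        · subst hto
          obtain ⟨r, hr⟩ := exists_decomp_D2 hbw hbt (pvar_ne_y (Ne.symm hoi) t)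
          have h4 := L4 (K := K) hti
          rw [pvar_comm hti] at h4
          have h4E := E_L4 (m := m) hti
          rw [pvar_comm hti] at h4E
          refine conclude (.y i) (D2 (.xJ t) (.y i) + r) hav ?_ ?_ ?_ ?_ ?_
          · rw [hr]; exact Cong.addRight r h4
          · rw [hr, map_add, map_add, h4E]
          · rw [hr, ycount_add, ycount_add, ycount_D2, ycount_D2, yw_pvar (Ne.symm hoi)]
            simp [yw]
          · rw [hr, deg_add, deg_add, deg_D2, deg_D2]
          · exact D2_add_apply_ne_zero _ _ r
        · obtain ⟨r, hr⟩ := exists_decomp_D2 hbw hbt (pvar_ne_y (Ne.symm hoi) t)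
          have h6 := L6 (K := K) (Ne.symm hoi) (fun he => hto he.symm) (Ne.symm hti)
          have h6E := E_L6 (m := m) (Ne.symm hoi) (fun he => hto he.symm) (Ne.symm hti)
          refine conclude (.y i) (D2 (pvar t o) (.y i) + r) hav ?_ ?_ ?_ ?_ ?_
          · rw [hr]; exact Cong.addRight r h6.symm
          · rw [hr, map_add, map_add, h6E]
          · rw [hr, ycount_add, ycount_add, ycount_D2, ycount_D2, yw_pvar (Ne.symm hoi),
              yw_pvar hto]
            simp [yw]
          · rw [hr, deg_add, deg_add, deg_D2, deg_D2]
          · exact D2_add_apply_ne_zero _ _ r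
    | xJ i =>
      have hcov2 : 2 ≤ EE b (2 * i.val + 3) := by
        rw [← hE]
        have h1 := term_le_EE a (.xJ i) (2 * i.val + 3)
        rw [ev_xJ_self] at h1
        omega
      rcases cover_two hcov2 with ⟨w, hbw, hw2⟩ | ⟨w, hbw2, hw1⟩ |
        ⟨w1, w2, hww, hbw1, hbw2, he1, he2⟩
      · have hwx := cover_two_classify hw2
        rw [hwx] at hbw
        exact absurd hbv hbw
      · rcases cover_classify (by omega : ev w (2 * i.val + 3) ≠ 0) with hw | hw | ⟨o, hoi, hw⟩
        · rw [hw] at hbw2; omega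
        · rw [hw] at hbw2
          have h3 := yterm_le_ycount b i
          omega
        · rw [hw] at hbw2
          obtain ⟨r, hr⟩ := exists_decomp_sq hbw2
          refine conclude (.xJ i) (D2 (.xJ i) (.xJ o) + r) hav ?_ ?_ ?_ ?_ ?_
          · rw [hr]; exact Cong.addRight r (L1 (Ne.symm hoi))
          · rw [hr, map_add, map_add, E_L1 (Ne.symm hoi)]
          · rw [hr, ycount_add, ycount_add, ycount_D2, ycount_D2, yw_pvar (Ne.symm hoi)]
            simp [yw]
          · rw [hr, deg_add, deg_add, deg_D2, deg_D2]
          · exact D2_add_apply_ne_zero' _ _ r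
      · have hc1 := cover_classify (Nat.one_le_iff_ne_zero.mp he1)
        have hc2 := cover_classify (Nat.one_le_iff_ne_zero.mp he2)
        rcases hc1 with hw1x | hw1x | ⟨o, ho, hw1x⟩
        · subst hw1x; exact absurd hbv hbw1
        · subst hw1x
          rcases hc2 with hw2x | hw2x | ⟨o', ho', hw2x⟩
          · subst hw2x; exact absurd hbv hbw2
          · exact absurd hw2x.symm hww
          · subst hw2x
            obtain ⟨r, hr⟩ := exists_decomp_D2 hbw2 hbw1 (pvar_ne_y (Ne.symm ho') i)
            refine conclude (.xJ i) (D2 (.xJ i) (.y o') + r) hav ?_ ?_ ?_ ?_ ?_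
            · rw [hr]; exact Cong.addRight r (L4 (Ne.symm ho'))
            · rw [hr, map_add, map_add, E_L4 (Ne.symm ho')]
            · rw [hr, ycount_add, ycount_add, ycount_D2, ycount_D2, yw_pvar (Ne.symm ho')]
              simp [yw]
            · rw [hr, deg_add, deg_add, deg_D2, deg_D2]
            · exact D2_add_apply_ne_zero' _ _ r
        · subst hw1x
          rcases hc2 with hw2x | hw2x | ⟨o', ho', hw2x⟩
          · subst hw2x; exact absurd hbv hbw2
          · subst hw2x
            obtain ⟨r, hr⟩ := exists_decomp_D2 hbw1 hbw2 (pvar_ne_y (Ne.symm ho) i)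
            refine conclude (.xJ i) (D2 (.xJ i) (.y o) + r) hav ?_ ?_ ?_ ?_ ?_
            · rw [hr]; exact Cong.addRight r (L4 (Ne.symm ho))
            · rw [hr, map_add, map_add, E_L4 (Ne.symm ho)]
            · rw [hr, ycount_add, ycount_add, ycount_D2, ycount_D2, yw_pvar (Ne.symm ho)]
              simp [yw]
            · rw [hr, deg_add, deg_add, deg_D2, deg_D2]
            · exact D2_add_apply_ne_zero' _ _ r
          · subst hw2x
            have hoo : o ≠ o' := fun he => hww (by rw [he])
            obtain ⟨r, hr⟩ := exists_decomp_D2 hbw1 hbw2 hww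
            refine conclude (.xJ i) (D2 (.xJ i) (pvar o o') + r) hav ?_ ?_ ?_ ?_ ?_
            · rw [hr]; exact Cong.addRight r (L2 hoo (Ne.symm ho) (Ne.symm ho'))
            · rw [hr, map_add, map_add, E_L2 hoo (Ne.symm ho) (Ne.symm ho')]
            · rw [hr, ycount_add, ycount_add, ycount_D2, ycount_D2, yw_pvar hoo,
                yw_pvar (Ne.symm ho), yw_pvar (Ne.symm ho')]
              simp [yw]
            · rw [hr, deg_add, deg_add, deg_D2, deg_D2]
            · exact D2_add_apply_ne_zero' _ _ r
    | xP i k hik =>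
      have hKik : i ≠ k := ne_of_lt hik
      have hbik : b (pvar i k) = 0 := by rw [pvar_lt hik]; exact hbv
      have hcovi : EE b (2 * i.val + 3) ≠ 0 := by
        rw [← hE]
        have h1 := term_le_EE a (.xP i k hik) (2 * i.val + 3)
        rw [ev_xP_fst] at h1
        omega
      have hcovk : EE b (2 * k.val + 3) ≠ 0 := by
        rw [← hE]
        have h1 := term_le_EE a (.xP i k hik) (2 * k.val + 3)
        rw [ev_xP_snd] at h1
        omega
      obtain ⟨w1, hbw1, he1⟩ := exists_cover hcovi
      obtain ⟨w2, hbw2, he2⟩ := exists_cover hcovk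
      rcases cover_classify he1 with hw1x | hw1x | ⟨o, ho, hw1x⟩
      · -- w1 = xJ i
        subst hw1x
        rcases cover_classify he2 with hw2x | hw2x | ⟨o', ho', hw2x⟩
        · -- w2 = xJ k
          subst hw2x
          obtain ⟨r, hr⟩ := exists_decomp_D2 hbw1 hbw2
            (fun he => hKik (by injection he))
          refine conclude (.xP i k hik) (D2 (pvar i k) (pvar i k) + r) hav ?_ ?_ ?_ ?_ ?_
          · rw [hr]; exact Cong.addRight r (L1 hKik).symm
          · rw [hr, map_add, map_add, E_L1 hKik]
          · rw [hr, ycount_add, ycount_add, ycount_D2, ycount_D2, yw_pvar hKik]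
            simp [yw]
          · rw [hr, deg_add, deg_add, deg_D2, deg_D2]
          · rw [xP_eq_pvar hik]; exact D2_add_apply_ne_zero' _ _ r
        · -- w2 = y k
          subst hw2x
          obtain ⟨r, hr⟩ := exists_decomp_D2 hbw1 hbw2 (by simp)
          refine conclude (.xP i k hik) (D2 (pvar i k) (.y i) + r) hav ?_ ?_ ?_ ?_ ?_
          · rw [hr]; exact Cong.addRight r (L4 hKik).symm
          · rw [hr, map_add, map_add, E_L4 hKik]
          · rw [hr, ycount_add, ycount_add, ycount_D2, ycount_D2, yw_pvar hKik]
            simp [yw]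
          · rw [hr, deg_add, deg_add, deg_D2, deg_D2]
          · rw [xP_eq_pvar hik]; exact D2_add_apply_ne_zero' _ _ r
        · -- w2 = pvar k o'
          subst hw2x
          have hoi' : o' ≠ i := by
            intro he
            subst he
            rw [pvar_comm (Ne.symm hKik)] at hbw2
            exact hbw2 hbik
          obtain ⟨r, hr⟩ := exists_decomp_D2 hbw1 hbw2 (Ne.symm (pvar_ne_xJ (Ne.symm ho') i))
          refine conclude (.xP i k hik) (D2 (pvar i k) (pvar i o') + r) hav ?_ ?_ ?_ ?_ ?_
          · rw [hr]; exact Cong.addRight r (L2 (Ne.symm ho') hKik (Ne.symm hoi')).symm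
          · rw [hr, map_add, map_add, E_L2 (Ne.symm ho') hKik (Ne.symm hoi')]
          · rw [hr, ycount_add, ycount_add, ycount_D2, ycount_D2, yw_pvar (Ne.symm ho'),
              yw_pvar hKik, yw_pvar (Ne.symm hoi')]
            simp [yw]
          · rw [hr, deg_add, deg_add, deg_D2, deg_D2]
          · rw [xP_eq_pvar hik]; exact D2_add_apply_ne_zero' _ _ r
      · -- w1 = y i
        subst hw1x
        rcases cover_classify he2 with hw2x | hw2x | ⟨o', ho', hw2x⟩
        · -- w2 = xJ k
          subst hw2x
          obtain ⟨r, hr⟩ := exists_decomp_D2 hbw2 hbw1 (by simp)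
          have h4 := L4 (K := K) (Ne.symm hKik)
          rw [pvar_comm (Ne.symm hKik)] at h4
          have h4E := E_L4 (m := m) (Ne.symm hKik)
          rw [pvar_comm (Ne.symm hKik)] at h4E
          refine conclude (.xP i k hik) (D2 (pvar i k) (.y k) + r) hav ?_ ?_ ?_ ?_ ?_
          · rw [hr]; exact Cong.addRight r h4.symm
          · rw [hr, map_add, map_add, h4E]
          · rw [hr, ycount_add, ycount_add, ycount_D2, ycount_D2, yw_pvar hKik]
            simp [yw]
          · rw [hr, deg_add, deg_add, deg_D2, deg_D2]
          · rw [xP_eq_pvar hik]; exact D2_add_apply_ne_zero' _ _ r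
        · -- w2 = y k : two y's in b, contradiction
          subst hw2x
          exfalso
          obtain ⟨r, hr⟩ := exists_decomp_D2 hbw1 hbw2 (by simp [hKik])
          apply hyb2
          rw [hr, ycount_add, ycount_D2]
          simp [yw]
        · -- w2 = pvar k o'
          subst hw2x
          have hoi' : o' ≠ i := by
            intro he
            subst he
            rw [pvar_comm (Ne.symm hKik)] at hbw2
            exact hbw2 hbik
          obtain ⟨r, hr⟩ := exists_decomp_D2 hbw2 hbw1 (pvar_ne_y (Ne.symm ho') i)
          have h6 := L6 (K := K) ho' (Ne.symm hKik) hoi'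
          rw [pvar_comm ho'] at h6
          have h6E := E_L6 (m := m) ho' (Ne.symm hKik) hoi'
          rw [pvar_comm ho'] at h6E
          refine conclude (.xP i k hik) (D2 (pvar i k) (.y o') + r) hav ?_ ?_ ?_ ?_ ?_
          · rw [hr]; exact Cong.addRight r h6.symm
          · rw [hr, map_add, map_add, h6E]
          · rw [hr, ycount_add, ycount_add, ycount_D2, ycount_D2, yw_pvar (Ne.symm ho'),
              yw_pvar hKik]
            simp [yw]
          · rw [hr, deg_add, deg_add, deg_D2, deg_D2]
          · rw [xP_eq_pvar hik]; exact D2_add_apply_ne_zero' _ _ r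
      · -- w1 = pvar i o
        subst hw1x
        have hok : o ≠ k := by
          intro he
          subst he
          exact hbw1 hbik
        rcases cover_classify he2 with hw2x | hw2x | ⟨o', ho', hw2x⟩
        · -- w2 = xJ k
          subst hw2x
          obtain ⟨r, hr⟩ := exists_decomp_D2 hbw2 hbw1 (Ne.symm (pvar_ne_xJ (Ne.symm ho) k))
          have h2 := L2 (K := K) (Ne.symm ho) (Ne.symm hKik) hok.symm
          rw [pvar_comm (Ne.symm hKik)] at h2
          have h2E := E_L2 (m := m) (Ne.symm ho) (Ne.symm hKik) hok.symm
          rw [pvar_comm (Ne.symm hKik)] at h2E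
          refine conclude (.xP i k hik) (D2 (pvar i k) (pvar k o) + r) hav ?_ ?_ ?_ ?_ ?_
          · rw [hr]; exact Cong.addRight r h2.symm
          · rw [hr, map_add, map_add, h2E]
          · rw [hr, ycount_add, ycount_add, ycount_D2, ycount_D2, yw_pvar (Ne.symm ho),
              yw_pvar hKik, yw_pvar hok.symm]
            simp [yw]
          · rw [hr, deg_add, deg_add, deg_D2, deg_D2]
          · rw [xP_eq_pvar hik]; exact D2_add_apply_ne_zero' _ _ r
        · -- w2 = y k
          subst hw2x
          obtain ⟨r, hr⟩ := exists_decomp_D2 hbw1 hbw2 (pvar_ne_y (Ne.symm ho) k)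
          have h6 := L6 (K := K) ho hKik hok
          rw [pvar_comm ho, pvar_comm (Ne.symm hKik)] at h6
          have h6E := E_L6 (m := m) ho hKik hok
          rw [pvar_comm ho, pvar_comm (Ne.symm hKik)] at h6E
          refine conclude (.xP i k hik) (D2 (pvar i k) (.y o) + r) hav ?_ ?_ ?_ ?_ ?_
          · rw [hr]; exact Cong.addRight r h6.symm
          · rw [hr, map_add, map_add, h6E]
          · rw [hr, ycount_add, ycount_add, ycount_D2, ycount_D2, yw_pvar (Ne.symm ho),
              yw_pvar hKik]
            simp [yw]
          · rw [hr, deg_add, deg_add, deg_D2, deg_D2]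
          · rw [xP_eq_pvar hik]; exact D2_add_apply_ne_zero' _ _ r
        · -- w2 = pvar k o'
          subst hw2x
          have hoi' : o' ≠ i := by
            intro he
            subst he
            rw [pvar_comm (Ne.symm hKik)] at hbw2
            exact hbw2 hbik
          rcases eq_or_ne o o' with hoo | hoo
          · subst hoo
            have hko : k ≠ o := Ne.symm hok
            have hne : (pvar i o : DVar m) ≠ pvar k o := by
              intro he
              rcases pvar_inj (Ne.symm ho) hko he with ⟨h1, _⟩ | ⟨h1, h2⟩
              · exact hKik h1
              · exact ho h1.symm
            obtain ⟨r, hr⟩ := exists_decomp_D2 hbw1 hbw2 hne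
            have h2 := L2 (K := K) hKik ho hok
            rw [pvar_comm ho, pvar_comm hok] at h2
            have h2E := E_L2 (m := m) hKik ho hok
            rw [pvar_comm ho, pvar_comm hok] at h2E
            refine conclude (.xP i k hik) (D2 (.xJ o) (pvar i k) + r) hav ?_ ?_ ?_ ?_ ?_
            · rw [hr]; exact Cong.addRight r h2
            · rw [hr, map_add, map_add, h2E]
            · rw [hr, ycount_add, ycount_add, ycount_D2, ycount_D2, yw_pvar hKik,
                yw_pvar (Ne.symm ho), yw_pvar (Ne.symm hok)]
              simp [yw]
            · rw [hr, deg_add, deg_add, deg_D2, deg_D2]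
            · rw [xP_eq_pvar hik]; exact D2_add_apply_ne_zero _ _ r
          · have hne : (pvar i o : DVar m) ≠ pvar k o' := by
              intro he
              rcases pvar_inj (Ne.symm ho) (Ne.symm ho') he with ⟨h1, _⟩ | ⟨h1, h2⟩
              · exact hKik h1
              · exact hoi' h1.symm
            obtain ⟨r, hr⟩ := exists_decomp_D2 hbw1 hbw2 hne
            refine conclude (.xP i k hik) (D2 (pvar i k) (pvar o o') + r) hav ?_ ?_ ?_ ?_ ?_
            · rw [hr]
              exact Cong.addRight r (L3 (Ne.symm ho) (Ne.symm ho') hKik (Ne.symm hoi')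
                hok hoo).symm
            · rw [hr, map_add, map_add,
                E_L3 (Ne.symm ho) (Ne.symm ho') hKik hoo]
            · rw [hr, ycount_add, ycount_add, ycount_D2, ycount_D2, yw_pvar (Ne.symm ho),
                yw_pvar (Ne.symm ho'), yw_pvar hKik, yw_pvar hoo]
            · rw [hr, deg_add, deg_add, deg_D2, deg_D2]
            · rw [xP_eq_pvar hik]; exact D2_add_apply_ne_zero' _ _ r

end DTor6
noncomputable section DTor7
open MvPolynomial Finsupp DVar

variable {K : Type*} [Field K] {m : ℕ}

lemma GD_sub_ker : GD K m ⊆ (RingHom.ker (piD K m) : Ideal (MvPolynomial (DVar m) K)) := by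
  rintro g (⟨i, j, k, l, hij, hjk, hkl, (rfl | rfl)⟩ |
    ⟨i, j, k, hij, hjk, (rfl | rfl | rfl | rfl | rfl)⟩ |
    ⟨i, j, hij, (rfl | rfl | rfl | rfl)⟩ | ⟨i, rfl⟩) <;>
    simp only [SetLike.mem_coe, RingHom.mem_ker, map_sub, map_mul, map_pow, piD, aeval_X,
      dImage] <;>
    ring

lemma ker_le_span : ∀ (n : ℕ) (f : MvPolynomial (DVar m) K), f.support.card ≤ n →
    piD K m f = 0 → f ∈ Ideal.span (GD K m) := by
  intro n
  induction n with
  | zero =>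
    intro f hc hf
    have h1 : f.support = ∅ := Finset.card_eq_zero.mp (le_antisymm hc (Nat.zero_le _))
    have h2 : f = 0 := MvPolynomial.support_eq_empty.mp h1
    simp [h2]
  | succ n ih =>
    intro f hc hf
    by_cases h0 : f = 0
    · simp [h0]
    by_cases hpair : ∃ a ∈ f.support, ∃ b ∈ f.support, a ≠ b ∧ EE a = EE b
    · obtain ⟨a, ha, b, hb, hab, hEab⟩ := hpair
      have hcne : coeff a f ≠ 0 := MvPolynomial.mem_support_iff.1 ha
      have hgspan : (monomial a 1 - monomial b 1 : MvPolynomial (DVar m) K) ∈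
          Ideal.span (GD K m) :=
        cong_of_EE _ a b le_rfl hEab
      have hgker : piD K m (monomial a 1 - monomial b 1) = 0 := by
        rw [map_sub, piD_monomial, piD_monomial, hEab, sub_self]
      set f' := f - C (coeff a f) * (monomial a 1 - monomial b 1) with hf'def
      have hfker : piD K m f' = 0 := by
        rw [map_sub, hf, map_mul, hgker, mul_zero, sub_zero]
      have hsupp : f'.support ⊆ f.support.erase a := by
        intro d hd
        have hd1 : coeff d f' ≠ 0 := MvPolynomial.mem_support_iff.1 hd
        have hda : d ≠ a := by
          intro he
          subst he
          apply hd1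
          simp [hf'def, coeff_sub, coeff_C_mul, coeff_monomial, Ne.symm hab]
        refine Finset.mem_erase.2 ⟨hda, ?_⟩
        by_contra hdf
        have hdb : d ≠ b := fun he => hdf (he ▸ hb)
        apply hd1
        simp [hf'def, coeff_sub, coeff_C_mul, coeff_monomial, MvPolynomial.notMem_support_iff.1 hdf,
          Ne.symm hda, Ne.symm hdb]
      have hcard : f'.support.card ≤ n := by
        have h1 : f'.support.card ≤ (f.support.erase a).card := Finset.card_le_card hsupp
        have h2 : (f.support.erase a).card < f.support.card := Finset.card_erase_lt_of_mem ha
        omega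
      have hmem := ih f' hcard hfker
      have hfeq : f = f' + C (coeff a f) * (monomial a 1 - monomial b 1) := by
        rw [hf'def]; ring
      rw [hfeq]
      exact add_mem hmem (Ideal.mul_mem_left _ _ hgspan)
    · exfalso
      push_neg at hpair
      obtain ⟨a0, ha0⟩ := (MvPolynomial.support_nonempty (p := f)).2 h0
      have hco : coeff (EE a0) (piD K m f) = coeff a0 f := by
        conv_lhs => rw [f.as_sum]
        rw [map_sum]
        simp_rw [piD_monomial]
        rw [coeff_sum]
        have hs : ∑ x ∈ f.support, coeff (EE a0) (monomial (EE x) (coeff x f)) =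
            coeff (EE a0) (monomial (EE a0) (coeff a0 f)) :=
          Finset.sum_eq_single a0 (fun v hv hvne => by
            rw [coeff_monomial, if_neg (hpair v hv a0 ha0 hvne)]) (fun h => absurd ha0 h)
        rw [hs, coeff_monomial, if_pos rfl]
      rw [hf, coeff_zero] at hco
      exact MvPolynomial.mem_support_iff.1 ha0 hco.symm

lemma span_GD_eq_ker : Ideal.span (GD K m) = RingHom.ker (piD K m) := by
  refine le_antisymm (Ideal.span_le.2 GD_sub_ker) ?_
  intro f hf
  exact ker_le_span f.support.card f le_rfl (RingHom.mem_ker.mp hf)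

end DTor7
noncomputable section DTor8
open MvPolynomial Finsupp DVar

variable {K : Type*} [Field K] {m : ℕ}

lemma monomial_mul_X (u v w : DVar m) :
    (monomial (D2 u v) 1 * X w : MvPolynomial (DVar m) K) = monomial (D3 u v w) 1 := by
  rw [X, monomial_mul, mul_one, D2, D3]

lemma mem_binom_support {α β e : DVar m →₀ ℕ}
    (h : e ∈ (monomial α (1 : K) - monomial β 1).support) : e = α ∨ e = β := by
  by_contra hc
  push_neg at hc
  apply MvPolynomial.mem_support_iff.1 h
  rw [coeff_sub, coeff_monomial, coeff_monomial, if_neg (Ne.symm hc.1), if_neg (Ne.symm hc.2),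
    sub_zero]

lemma coeff_binom (A B : DVar m →₀ ℕ) (h : B ≠ A) :
    coeff A (monomial A (1 : K) - monomial B 1) = 1 := by
  rw [coeff_sub, coeff_monomial, coeff_monomial, if_pos rfl, if_neg h, sub_zero]

lemma coeff_span_zero {S : Set (MvPolynomial (DVar m) K)} {A : DVar m →₀ ℕ}
    (H : ∀ s ∈ S, ∀ e ∈ s.support, ¬ e ≤ A) :
    ∀ f ∈ Ideal.span S, coeff A f = 0 := by
  intro f hf
  obtain ⟨n, c, g, hsum⟩ := Submodule.mem_span_set'.1 hf
  rw [← hsum, coeff_sum]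
  apply Finset.sum_eq_zero
  intro i _
  rw [smul_eq_mul, coeff_mul]
  apply Finset.sum_eq_zero
  intro x hx
  rcases eq_or_ne (coeff x.2 ((g i : MvPolynomial (DVar m) K))) 0 with h | h
  · rw [h, mul_zero]
  · exfalso
    refine H _ (g i).2 x.2 (MvPolynomial.mem_support_iff.2 h) ?_
    have hxa : x.1 + x.2 = A := Finset.HasAntidiagonal.mem_antidiagonal.1 hx
    calc x.2 ≤ x.1 + x.2 := le_add_self
    _ = A := hxa

lemma deg_le_of_le {e A : DVar m →₀ ℕ} (h : e ≤ A) : deg e ≤ deg A := by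
  have hsub := tsub_add_cancel_of_le h
  have h2 : deg A = deg (A - e) + deg e := by rw [← deg_add, hsub]
  omega

lemma eq_of_le_deg {e A : DVar m →₀ ℕ} (h : e ≤ A) (hd : deg A ≤ deg e) : e = A := by
  have hsub := tsub_add_cancel_of_le h
  have h2 : deg A = deg (A - e) + deg e := by rw [← deg_add, hsub]
  have h3 : deg (A - e) = 0 := by
    have := deg_le_of_le h
    omega
  rw [← hsub, deg_eq_zero h3, zero_add]

lemma eq_of_D2_le {u v w z : DVar m} (h : D2 u v ≤ D2 w z) : D2 u v = D2 w z :=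
  eq_of_le_deg h (by rw [deg_D2, deg_D2])

lemma D2_inj {u v w z : DVar m} (h : D2 u v = D2 w z) :
    (u = w ∧ v = z) ∨ (u = z ∧ v = w) := by
  unfold D2 at h
  rcases (Finsupp.single_add_single_eq_single_add_single one_ne_zero one_ne_zero).1 h with
    h | h | h
  · exact Or.inl h
  · exact Or.inr ⟨h.2.1, h.2.2⟩
  · exact absurd h.1 (by simp)

lemma not_D3_le_D2 {u v w p q : DVar m} : ¬ D3 u v w ≤ D2 p q := by
  intro h
  have := deg_le_of_le h
  rw [deg_D3, deg_D2] at this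
  omega

lemma not_D2_le_D3 {u v q : DVar m} (hu1 : u ≠ .x1) (hu2 : u ≠ .xn) (hv1 : v ≠ .x1)
    (hv2 : v ≠ .xn) (hq1 : q ≠ .x1) (hq2 : q ≠ .xn) : ¬ D2 u v ≤ D3 q .x1 .xn := by
  intro h
  have hqu : q = u := by
    by_contra hq
    have h1 := Finsupp.le_def.1 h u
    simp [D2, D3, Finsupp.single_apply, hq, Ne.symm hu1, Ne.symm hu2] at h1
  have hqv : q = v := by
    by_contra hq
    have h1 := Finsupp.le_def.1 h v
    simp [D2, D3, Finsupp.single_apply, hq, Ne.symm hv1, Ne.symm hv2] at h1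
  have huv : u = v := hqu.symm.trans hqv
  have h1 := Finsupp.le_def.1 h u
  rw [← huv, hqu] at h1
  simp [D2, D3, Finsupp.single_apply, Ne.symm hu1, Ne.symm hu2] at h1

lemma D3_le_inj {q q' : DVar m} (h : D3 q .x1 .xn ≤ D3 q' .x1 .xn) : q = q' := by
  have he : D3 q .x1 .xn = D3 q' .x1 .xn := eq_of_le_deg h (by rw [deg_D3, deg_D3])
  unfold D3 at he
  have h2 := add_right_cancel he
  have h3 := add_right_cancel h2
  exact Finsupp.single_left_injective one_ne_zero h3

end DTor8
noncomputable section DTor9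
open MvPolynomial Finsupp DVar

variable {K : Type*} [Field K] {m : ℕ}

attribute [irreducible] D2 D3

set_option maxHeartbeats 4000000 in
lemma not_mem_span_of_GD {S : Set (MvPolynomial (DVar m) K)} (hS : S ⊆ GD K m)
    {g : MvPolynomial (DVar m) K} (hg : g ∈ GD K m) (hgS : g ∉ S) :
    g ∉ Ideal.span S := by
  intro hspan
  rcases hg with (⟨i, j, k, l, hij, hjk, hkl, (rfl | rfl)⟩ |
    ⟨i, j, k, hij, hjk, (rfl | rfl | rfl | rfl | rfl)⟩ |
    ⟨i, j, hij, (rfl | rfl | rfl | rfl)⟩ | ⟨i, rfl⟩)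
  · have hBA : (D2 (DVar.xP i j hij) (DVar.xP k l hkl) : DVar m →₀ ℕ) ≠ D2 (DVar.xP i k (hij.trans hjk)) (DVar.xP j l (hjk.trans hkl)) := by
      intro he
      first
      | (have hd := congrArg deg he; rw [deg_D2, deg_D3] at hd; omega)
      | (rcases D2_inj he with ⟨h1, h2⟩ | ⟨h1, h2⟩ <;> cases h1 <;> cases h2 <;> omega)
    have H : ∀ s ∈ S, ∀ e ∈ s.support, ¬ e ≤ D2 (DVar.xP i k (hij.trans hjk)) (DVar.xP j l (hjk.trans hkl)) := by
      intro s hsS e hes hle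
      rcases hS hsS with (⟨i', j', k', l', hij', hjk', hkl', (rfl | rfl)⟩ |
        ⟨i', j', k', hij', hjk', (rfl | rfl | rfl | rfl | rfl)⟩ |
        ⟨i', j', hij', (rfl | rfl | rfl | rfl)⟩ | ⟨i', rfl⟩) <;>
      simp only [X_mul_X, X_sq, monomial_mul_X] at hes <;>
      rcases mem_binom_support hes with rfl | rfl <;>
      (first
        | exact not_D3_le_D2 hle
        | exact not_D2_le_D3 (by simp) (by simp) (by simp) (by simp) (by simp) (by simp) hle
        | (rcases D2_inj (eq_of_D2_le hle) with ⟨h1, h2⟩ | ⟨h1, h2⟩ <;>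
            cases h1 <;> cases h2 <;>
            first
              | exact hgS hsS
              | omega)
        | (have hq := D3_le_inj hle
           cases hq <;>
           first
             | exact hgS hsS
             | omega))
    have hc := coeff_span_zero H _ hspan
    have hg1 : coeff (D2 (DVar.xP i k (hij.trans hjk)) (DVar.xP j l (hjk.trans hkl)))
        (X (DVar.xP i k (hij.trans hjk)) * X (DVar.xP j l (hjk.trans hkl)) - X (DVar.xP i j hij) * X (DVar.xP k l hkl) : MvPolynomial (DVar m) K) = 1 := by
      simp only [X_mul_X, X_sq, monomial_mul_X]
      exact coeff_binom _ _ hBA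
    rw [hg1] at hc
    exact one_ne_zero hc
  · have hBA : (D2 (DVar.xP i j hij) (DVar.xP k l hkl) : DVar m →₀ ℕ) ≠ D2 (DVar.xP i l (hij.trans (hjk.trans hkl))) (DVar.xP j k hjk) := by
      intro he
      first
      | (have hd := congrArg deg he; rw [deg_D2, deg_D3] at hd; omega)
      | (rcases D2_inj he with ⟨h1, h2⟩ | ⟨h1, h2⟩ <;> cases h1 <;> cases h2 <;> omega)
    have H : ∀ s ∈ S, ∀ e ∈ s.support, ¬ e ≤ D2 (DVar.xP i l (hij.trans (hjk.trans hkl))) (DVar.xP j k hjk) := by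
      intro s hsS e hes hle
      rcases hS hsS with (⟨i', j', k', l', hij', hjk', hkl', (rfl | rfl)⟩ |
        ⟨i', j', k', hij', hjk', (rfl | rfl | rfl | rfl | rfl)⟩ |
        ⟨i', j', hij', (rfl | rfl | rfl | rfl)⟩ | ⟨i', rfl⟩) <;>
      simp only [X_mul_X, X_sq, monomial_mul_X] at hes <;>
      rcases mem_binom_support hes with rfl | rfl <;>
      (first
        | exact not_D3_le_D2 hle
        | exact not_D2_le_D3 (by simp) (by simp) (by simp) (by simp) (by simp) (by simp) hle
        | (rcases D2_inj (eq_of_D2_le hle) with ⟨h1, h2⟩ | ⟨h1, h2⟩ <;>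
            cases h1 <;> cases h2 <;>
            first
              | exact hgS hsS
              | omega)
        | (have hq := D3_le_inj hle
           cases hq <;>
           first
             | exact hgS hsS
             | omega))
    have hc := coeff_span_zero H _ hspan
    have hg1 : coeff (D2 (DVar.xP i l (hij.trans (hjk.trans hkl))) (DVar.xP j k hjk))
        (X (DVar.xP i l (hij.trans (hjk.trans hkl))) * X (DVar.xP j k hjk) - X (DVar.xP i j hij) * X (DVar.xP k l hkl) : MvPolynomial (DVar m) K) = 1 := by
      simp only [X_mul_X, X_sq, monomial_mul_X]
      exact coeff_binom _ _ hBA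
    rw [hg1] at hc
    exact one_ne_zero hc
  · have hBA : (D2 (DVar.xJ i) (DVar.xP j k hjk) : DVar m →₀ ℕ) ≠ D2 (DVar.xP i j hij) (DVar.xP i k (hij.trans hjk)) := by
      intro he
      first
      | (have hd := congrArg deg he; rw [deg_D2, deg_D3] at hd; omega)
      | (rcases D2_inj he with ⟨h1, h2⟩ | ⟨h1, h2⟩ <;> cases h1 <;> cases h2 <;> omega)
    have H : ∀ s ∈ S, ∀ e ∈ s.support, ¬ e ≤ D2 (DVar.xP i j hij) (DVar.xP i k (hij.trans hjk)) := by
      intro s hsS e hes hle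
      rcases hS hsS with (⟨i', j', k', l', hij', hjk', hkl', (rfl | rfl)⟩ |
        ⟨i', j', k', hij', hjk', (rfl | rfl | rfl | rfl | rfl)⟩ |
        ⟨i', j', hij', (rfl | rfl | rfl | rfl)⟩ | ⟨i', rfl⟩) <;>
      simp only [X_mul_X, X_sq, monomial_mul_X] at hes <;>
      rcases mem_binom_support hes with rfl | rfl <;>
      (first
        | exact not_D3_le_D2 hle
        | exact not_D2_le_D3 (by simp) (by simp) (by simp) (by simp) (by simp) (by simp) hle
        | (rcases D2_inj (eq_of_D2_le hle) with ⟨h1, h2⟩ | ⟨h1, h2⟩ <;>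
            cases h1 <;> cases h2 <;>
            first
              | exact hgS hsS
              | omega)
        | (have hq := D3_le_inj hle
           cases hq <;>
           first
             | exact hgS hsS
             | omega))
    have hc := coeff_span_zero H _ hspan
    have hg1 : coeff (D2 (DVar.xP i j hij) (DVar.xP i k (hij.trans hjk)))
        (X (DVar.xP i j hij) * X (DVar.xP i k (hij.trans hjk)) - X (DVar.xJ i) * X (DVar.xP j k hjk) : MvPolynomial (DVar m) K) = 1 := by
      simp only [X_mul_X, X_sq, monomial_mul_X]
      exact coeff_binom _ _ hBA
    rw [hg1] at hc
    exact one_ne_zero hc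
  · have hBA : (D2 (DVar.xP i j hij) (DVar.xP j k hjk) : DVar m →₀ ℕ) ≠ D2 (DVar.xJ j) (DVar.xP i k (hij.trans hjk)) := by
      intro he
      first
      | (have hd := congrArg deg he; rw [deg_D2, deg_D3] at hd; omega)
      | (rcases D2_inj he with ⟨h1, h2⟩ | ⟨h1, h2⟩ <;> cases h1 <;> cases h2 <;> omega)
    have H : ∀ s ∈ S, ∀ e ∈ s.support, ¬ e ≤ D2 (DVar.xJ j) (DVar.xP i k (hij.trans hjk)) := by
      intro s hsS e hes hle
      rcases hS hsS with (⟨i', j', k', l', hij', hjk', hkl', (rfl | rfl)⟩ |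
        ⟨i', j', k', hij', hjk', (rfl | rfl | rfl | rfl | rfl)⟩ |
        ⟨i', j', hij', (rfl | rfl | rfl | rfl)⟩ | ⟨i', rfl⟩) <;>
      simp only [X_mul_X, X_sq, monomial_mul_X] at hes <;>
      rcases mem_binom_support hes with rfl | rfl <;>
      (first
        | exact not_D3_le_D2 hle
        | exact not_D2_le_D3 (by simp) (by simp) (by simp) (by simp) (by simp) (by simp) hle
        | (rcases D2_inj (eq_of_D2_le hle) with ⟨h1, h2⟩ | ⟨h1, h2⟩ <;>
            cases h1 <;> cases h2 <;>
            first
              | exact hgS hsS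
              | omega)
        | (have hq := D3_le_inj hle
           cases hq <;>
           first
             | exact hgS hsS
             | omega))
    have hc := coeff_span_zero H _ hspan
    have hg1 : coeff (D2 (DVar.xJ j) (DVar.xP i k (hij.trans hjk)))
        (X (DVar.xJ j) * X (DVar.xP i k (hij.trans hjk)) - X (DVar.xP i j hij) * X (DVar.xP j k hjk) : MvPolynomial (DVar m) K) = 1 := by
      simp only [X_mul_X, X_sq, monomial_mul_X]
      exact coeff_binom _ _ hBA
    rw [hg1] at hc
    exact one_ne_zero hc
  · have hBA : (D2 (DVar.xP i k (hij.trans hjk)) (DVar.xP j k hjk) : DVar m →₀ ℕ) ≠ D2 (DVar.xJ k) (DVar.xP i j hij) := by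
      intro he
      first
      | (have hd := congrArg deg he; rw [deg_D2, deg_D3] at hd; omega)
      | (rcases D2_inj he with ⟨h1, h2⟩ | ⟨h1, h2⟩ <;> cases h1 <;> cases h2 <;> omega)
    have H : ∀ s ∈ S, ∀ e ∈ s.support, ¬ e ≤ D2 (DVar.xJ k) (DVar.xP i j hij) := by
      intro s hsS e hes hle
      rcases hS hsS with (⟨i', j', k', l', hij', hjk', hkl', (rfl | rfl)⟩ |
        ⟨i', j', k', hij', hjk', (rfl | rfl | rfl | rfl | rfl)⟩ |
        ⟨i', j', hij', (rfl | rfl | rfl | rfl)⟩ | ⟨i', rfl⟩) <;>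
      simp only [X_mul_X, X_sq, monomial_mul_X] at hes <;>
      rcases mem_binom_support hes with rfl | rfl <;>
      (first
        | exact not_D3_le_D2 hle
        | exact not_D2_le_D3 (by simp) (by simp) (by simp) (by simp) (by simp) (by simp) hle
        | (rcases D2_inj (eq_of_D2_le hle) with ⟨h1, h2⟩ | ⟨h1, h2⟩ <;>
            cases h1 <;> cases h2 <;>
            first
              | exact hgS hsS
              | omega)
        | (have hq := D3_le_inj hle
           cases hq <;>
           first
             | exact hgS hsS
             | omega))
    have hc := coeff_span_zero H _ hspan
    have hg1 : coeff (D2 (DVar.xJ k) (DVar.xP i j hij))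
        (X (DVar.xJ k) * X (DVar.xP i j hij) - X (DVar.xP i k (hij.trans hjk)) * X (DVar.xP j k hjk) : MvPolynomial (DVar m) K) = 1 := by
      simp only [X_mul_X, X_sq, monomial_mul_X]
      exact coeff_binom _ _ hBA
    rw [hg1] at hc
    exact one_ne_zero hc
  · have hBA : (D2 (DVar.xP i j hij) (DVar.y k) : DVar m →₀ ℕ) ≠ D2 (DVar.xP j k hjk) (DVar.y i) := by
      intro he
      first
      | (have hd := congrArg deg he; rw [deg_D2, deg_D3] at hd; omega)
      | (rcases D2_inj he with ⟨h1, h2⟩ | ⟨h1, h2⟩ <;> cases h1 <;> cases h2 <;> omega)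
    have H : ∀ s ∈ S, ∀ e ∈ s.support, ¬ e ≤ D2 (DVar.xP j k hjk) (DVar.y i) := by
      intro s hsS e hes hle
      rcases hS hsS with (⟨i', j', k', l', hij', hjk', hkl', (rfl | rfl)⟩ |
        ⟨i', j', k', hij', hjk', (rfl | rfl | rfl | rfl | rfl)⟩ |
        ⟨i', j', hij', (rfl | rfl | rfl | rfl)⟩ | ⟨i', rfl⟩) <;>
      simp only [X_mul_X, X_sq, monomial_mul_X] at hes <;>
      rcases mem_binom_support hes with rfl | rfl <;>
      (first
        | exact not_D3_le_D2 hle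
        | exact not_D2_le_D3 (by simp) (by simp) (by simp) (by simp) (by simp) (by simp) hle
        | (rcases D2_inj (eq_of_D2_le hle) with ⟨h1, h2⟩ | ⟨h1, h2⟩ <;>
            cases h1 <;> cases h2 <;>
            first
              | exact hgS hsS
              | omega)
        | (have hq := D3_le_inj hle
           cases hq <;>
           first
             | exact hgS hsS
             | omega))
    have hc := coeff_span_zero H _ hspan
    have hg1 : coeff (D2 (DVar.xP j k hjk) (DVar.y i))
        (X (DVar.xP j k hjk) * X (DVar.y i) - X (DVar.xP i j hij) * X (DVar.y k) : MvPolynomial (DVar m) K) = 1 := by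
      simp only [X_mul_X, X_sq, monomial_mul_X]
      exact coeff_binom _ _ hBA
    rw [hg1] at hc
    exact one_ne_zero hc
  · have hBA : (D2 (DVar.xP i j hij) (DVar.y k) : DVar m →₀ ℕ) ≠ D2 (DVar.xP i k (hij.trans hjk)) (DVar.y j) := by
      intro he
      first
      | (have hd := congrArg deg he; rw [deg_D2, deg_D3] at hd; omega)
      | (rcases D2_inj he with ⟨h1, h2⟩ | ⟨h1, h2⟩ <;> cases h1 <;> cases h2 <;> omega)
    have H : ∀ s ∈ S, ∀ e ∈ s.support, ¬ e ≤ D2 (DVar.xP i k (hij.trans hjk)) (DVar.y j) := by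
      intro s hsS e hes hle
      rcases hS hsS with (⟨i', j', k', l', hij', hjk', hkl', (rfl | rfl)⟩ |
        ⟨i', j', k', hij', hjk', (rfl | rfl | rfl | rfl | rfl)⟩ |
        ⟨i', j', hij', (rfl | rfl | rfl | rfl)⟩ | ⟨i', rfl⟩) <;>
      simp only [X_mul_X, X_sq, monomial_mul_X] at hes <;>
      rcases mem_binom_support hes with rfl | rfl <;>
      (first
        | exact not_D3_le_D2 hle
        | exact not_D2_le_D3 (by simp) (by simp) (by simp) (by simp) (by simp) (by simp) hle
        | (rcases D2_inj (eq_of_D2_le hle) with ⟨h1, h2⟩ | ⟨h1, h2⟩ <;>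
            cases h1 <;> cases h2 <;>
            first
              | exact hgS hsS
              | omega)
        | (have hq := D3_le_inj hle
           cases hq <;>
           first
             | exact hgS hsS
             | omega))
    have hc := coeff_span_zero H _ hspan
    have hg1 : coeff (D2 (DVar.xP i k (hij.trans hjk)) (DVar.y j))
        (X (DVar.xP i k (hij.trans hjk)) * X (DVar.y j) - X (DVar.xP i j hij) * X (DVar.y k) : MvPolynomial (DVar m) K) = 1 := by
      simp only [X_mul_X, X_sq, monomial_mul_X]
      exact coeff_binom _ _ hBA
    rw [hg1] at hc
    exact one_ne_zero hc
  · have hBA : (D2 (DVar.xP i j hij) (DVar.xP i j hij) : DVar m →₀ ℕ) ≠ D2 (DVar.xJ i) (DVar.xJ j) := by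
      intro he
      first
      | (have hd := congrArg deg he; rw [deg_D2, deg_D3] at hd; omega)
      | (rcases D2_inj he with ⟨h1, h2⟩ | ⟨h1, h2⟩ <;> cases h1 <;> cases h2 <;> omega)
    have H : ∀ s ∈ S, ∀ e ∈ s.support, ¬ e ≤ D2 (DVar.xJ i) (DVar.xJ j) := by
      intro s hsS e hes hle
      rcases hS hsS with (⟨i', j', k', l', hij', hjk', hkl', (rfl | rfl)⟩ |
        ⟨i', j', k', hij', hjk', (rfl | rfl | rfl | rfl | rfl)⟩ |
        ⟨i', j', hij', (rfl | rfl | rfl | rfl)⟩ | ⟨i', rfl⟩) <;>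
      simp only [X_mul_X, X_sq, monomial_mul_X] at hes <;>
      rcases mem_binom_support hes with rfl | rfl <;>
      (first
        | exact not_D3_le_D2 hle
        | exact not_D2_le_D3 (by simp) (by simp) (by simp) (by simp) (by simp) (by simp) hle
        | (rcases D2_inj (eq_of_D2_le hle) with ⟨h1, h2⟩ | ⟨h1, h2⟩ <;>
            cases h1 <;> cases h2 <;>
            first
              | exact hgS hsS
              | omega)
        | (have hq := D3_le_inj hle
           cases hq <;>
           first
             | exact hgS hsS
             | omega))
    have hc := coeff_span_zero H _ hspan
    have hg1 : coeff (D2 (DVar.xJ i) (DVar.xJ j))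
        (X (DVar.xJ i) * X (DVar.xJ j) - X (DVar.xP i j hij) ^ 2 : MvPolynomial (DVar m) K) = 1 := by
      simp only [X_mul_X, X_sq, monomial_mul_X]
      exact coeff_binom _ _ hBA
    rw [hg1] at hc
    exact one_ne_zero hc
  · have hBA : (D2 (DVar.xP i j hij) (DVar.y j) : DVar m →₀ ℕ) ≠ D2 (DVar.xJ j) (DVar.y i) := by
      intro he
      first
      | (have hd := congrArg deg he; rw [deg_D2, deg_D3] at hd; omega)
      | (rcases D2_inj he with ⟨h1, h2⟩ | ⟨h1, h2⟩ <;> cases h1 <;> cases h2 <;> omega)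
    have H : ∀ s ∈ S, ∀ e ∈ s.support, ¬ e ≤ D2 (DVar.xJ j) (DVar.y i) := by
      intro s hsS e hes hle
      rcases hS hsS with (⟨i', j', k', l', hij', hjk', hkl', (rfl | rfl)⟩ |
        ⟨i', j', k', hij', hjk', (rfl | rfl | rfl | rfl | rfl)⟩ |
        ⟨i', j', hij', (rfl | rfl | rfl | rfl)⟩ | ⟨i', rfl⟩) <;>
      simp only [X_mul_X, X_sq, monomial_mul_X] at hes <;>
      rcases mem_binom_support hes with rfl | rfl <;>
      (first
        | exact not_D3_le_D2 hle
        | exact not_D2_le_D3 (by simp) (by simp) (by simp) (by simp) (by simp) (by simp) hle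
        | (rcases D2_inj (eq_of_D2_le hle) with ⟨h1, h2⟩ | ⟨h1, h2⟩ <;>
            cases h1 <;> cases h2 <;>
            first
              | exact hgS hsS
              | omega)
        | (have hq := D3_le_inj hle
           cases hq <;>
           first
             | exact hgS hsS
             | omega))
    have hc := coeff_span_zero H _ hspan
    have hg1 : coeff (D2 (DVar.xJ j) (DVar.y i))
        (X (DVar.xJ j) * X (DVar.y i) - X (DVar.xP i j hij) * X (DVar.y j) : MvPolynomial (DVar m) K) = 1 := by
      simp only [X_mul_X, X_sq, monomial_mul_X]
      exact coeff_binom _ _ hBA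
    rw [hg1] at hc
    exact one_ne_zero hc
  · have hBA : (D2 (DVar.xJ i) (DVar.y j) : DVar m →₀ ℕ) ≠ D2 (DVar.xP i j hij) (DVar.y i) := by
      intro he
      first
      | (have hd := congrArg deg he; rw [deg_D2, deg_D3] at hd; omega)
      | (rcases D2_inj he with ⟨h1, h2⟩ | ⟨h1, h2⟩ <;> cases h1 <;> cases h2 <;> omega)
    have H : ∀ s ∈ S, ∀ e ∈ s.support, ¬ e ≤ D2 (DVar.xP i j hij) (DVar.y i) := by
      intro s hsS e hes hle
      rcases hS hsS with (⟨i', j', k', l', hij', hjk', hkl', (rfl | rfl)⟩ |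
        ⟨i', j', k', hij', hjk', (rfl | rfl | rfl | rfl | rfl)⟩ |
        ⟨i', j', hij', (rfl | rfl | rfl | rfl)⟩ | ⟨i', rfl⟩) <;>
      simp only [X_mul_X, X_sq, monomial_mul_X] at hes <;>
      rcases mem_binom_support hes with rfl | rfl <;>
      (first
        | exact not_D3_le_D2 hle
        | exact not_D2_le_D3 (by simp) (by simp) (by simp) (by simp) (by simp) (by simp) hle
        | (rcases D2_inj (eq_of_D2_le hle) with ⟨h1, h2⟩ | ⟨h1, h2⟩ <;>
            cases h1 <;> cases h2 <;>
            first
              | exact hgS hsS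
              | omega)
        | (have hq := D3_le_inj hle
           cases hq <;>
           first
             | exact hgS hsS
             | omega))
    have hc := coeff_span_zero H _ hspan
    have hg1 : coeff (D2 (DVar.xP i j hij) (DVar.y i))
        (X (DVar.xP i j hij) * X (DVar.y i) - X (DVar.xJ i) * X (DVar.y j) : MvPolynomial (DVar m) K) = 1 := by
      simp only [X_mul_X, X_sq, monomial_mul_X]
      exact coeff_binom _ _ hBA
    rw [hg1] at hc
    exact one_ne_zero hc
  · have hBA : (D2 (DVar.y i) (DVar.y j) : DVar m →₀ ℕ) ≠ D3 (DVar.xP i j hij) DVar.x1 DVar.xn := by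
      intro he
      first
      | (have hd := congrArg deg he; rw [deg_D2, deg_D3] at hd; omega)
      | (rcases D2_inj he with ⟨h1, h2⟩ | ⟨h1, h2⟩ <;> cases h1 <;> cases h2 <;> omega)
    have H : ∀ s ∈ S, ∀ e ∈ s.support, ¬ e ≤ D3 (DVar.xP i j hij) DVar.x1 DVar.xn := by
      intro s hsS e hes hle
      rcases hS hsS with (⟨i', j', k', l', hij', hjk', hkl', (rfl | rfl)⟩ |
        ⟨i', j', k', hij', hjk', (rfl | rfl | rfl | rfl | rfl)⟩ |
        ⟨i', j', hij', (rfl | rfl | rfl | rfl)⟩ | ⟨i', rfl⟩) <;>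
      simp only [X_mul_X, X_sq, monomial_mul_X] at hes <;>
      rcases mem_binom_support hes with rfl | rfl <;>
      (first
        | exact not_D3_le_D2 hle
        | exact not_D2_le_D3 (by simp) (by simp) (by simp) (by simp) (by simp) (by simp) hle
        | (rcases D2_inj (eq_of_D2_le hle) with ⟨h1, h2⟩ | ⟨h1, h2⟩ <;>
            cases h1 <;> cases h2 <;>
            first
              | exact hgS hsS
              | omega)
        | (have hq := D3_le_inj hle
           cases hq <;>
           first
             | exact hgS hsS
             | omega))
    have hc := coeff_span_zero H _ hspan
    have hg1 : coeff (D3 (DVar.xP i j hij) DVar.x1 DVar.xn)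
        (X (DVar.xP i j hij) * X DVar.x1 * X DVar.xn - X (DVar.y i) * X (DVar.y j) : MvPolynomial (DVar m) K) = 1 := by
      simp only [X_mul_X, X_sq, monomial_mul_X]
      exact coeff_binom _ _ hBA
    rw [hg1] at hc
    exact one_ne_zero hc
  · have hBA : (D2 (DVar.y i) (DVar.y i) : DVar m →₀ ℕ) ≠ D3 (DVar.xJ i) DVar.x1 DVar.xn := by
      intro he
      first
      | (have hd := congrArg deg he; rw [deg_D2, deg_D3] at hd; omega)
      | (rcases D2_inj he with ⟨h1, h2⟩ | ⟨h1, h2⟩ <;> cases h1 <;> cases h2 <;> omega)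
    have H : ∀ s ∈ S, ∀ e ∈ s.support, ¬ e ≤ D3 (DVar.xJ i) DVar.x1 DVar.xn := by
      intro s hsS e hes hle
      rcases hS hsS with (⟨i', j', k', l', hij', hjk', hkl', (rfl | rfl)⟩ |
        ⟨i', j', k', hij', hjk', (rfl | rfl | rfl | rfl | rfl)⟩ |
        ⟨i', j', hij', (rfl | rfl | rfl | rfl)⟩ | ⟨i', rfl⟩) <;>
      simp only [X_mul_X, X_sq, monomial_mul_X] at hes <;>
      rcases mem_binom_support hes with rfl | rfl <;>
      (first
        | exact not_D3_le_D2 hle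
        | exact not_D2_le_D3 (by simp) (by simp) (by simp) (by simp) (by simp) (by simp) hle
        | (rcases D2_inj (eq_of_D2_le hle) with ⟨h1, h2⟩ | ⟨h1, h2⟩ <;>
            cases h1 <;> cases h2 <;>
            first
              | exact hgS hsS
              | omega)
        | (have hq := D3_le_inj hle
           cases hq <;>
           first
             | exact hgS hsS
             | omega))
    have hc := coeff_span_zero H _ hspan
    have hg1 : coeff (D3 (DVar.xJ i) DVar.x1 DVar.xn)
        (X (DVar.xJ i) * X DVar.x1 * X DVar.xn - X (DVar.y i) ^ 2 : MvPolynomial (DVar m) K) = 1 := by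
      simp only [X_mul_X, X_sq, monomial_mul_X]
      exact coeff_binom _ _ hBA
    rw [hg1] at hc
    exact one_ne_zero hc

end DTor9
/-- `𝒢_{D_{2m}}` is a minimal generating set of `I_{D_{2m}}`: it generates the
toric ideal, and no proper subset of it generates the toric ideal. -/
theorem GD_minimal_generating (K : Type*) [Field K] (m : ℕ) (hm : 2 ≤ m) :
    Ideal.span (GD K m) = RingHom.ker (piD K m) ∧
      ∀ S : Set (MvPolynomial (DVar m) K), S ⊂ GD K m →
        Ideal.span S ≠ RingHom.ker (piD K m) := by
  constructor
  · exact span_GD_eq_ker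
  · intro S hSsub hcon
    obtain ⟨g, hgGD, hgS⟩ := Set.exists_of_ssubset hSsub
    have hgker : g ∈ RingHom.ker (piD K m) := by
      rw [← span_GD_eq_ker]
      exact Ideal.subset_span hgGD
    rw [← hcon] at hgker
    exact not_mem_span_of_GD hSsub.subset hgGD hgS hgker
end

section
/- The binomials x_i x_j − x_{i,j}² (for i < j in J) and x_i x_1 x_n − y_i² (for i ∈ J) are indispensable binomials of I_{D_{2m}}: for every set B of binomials (differences of two monomials of R) whose generated ideal equals I_{D_{2m}}, and for all i < j in J, either x_i x_j − x_{i,j}² ∈ B or x_{i,j}² − x_i x_j ∈ B, and for all i ∈ J, either x_i x_1 x_n − y_i² ∈ B or y_i² − x_i x_1 x_n ∈ B. -/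
open MvPolynomial

namespace DAux

open Finsupp

noncomputable def wD (m : ℕ) : DVar m → (ℕ →₀ ℕ)
  | .x1 => Finsupp.single 1 2
  | .xn => Finsupp.single (2 * m) 2
  | .xJ t => Finsupp.single (2 * t.val + 3) 2
  | .xJc t => Finsupp.single (2 * t.val + 2) 1
  | .xP s t _ => Finsupp.single (2 * s.val + 3) 1 + Finsupp.single (2 * t.val + 3) 1
  | .y t => Finsupp.single (2 * t.val + 3) 1 + Finsupp.single 1 1 + Finsupp.single (2 * m) 1

noncomputable def degD (m : ℕ) (z : DVar m →₀ ℕ) : ℕ →₀ ℕ := z.sum fun v k => k • wD m v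

lemma degD_add (m : ℕ) (z z' : DVar m →₀ ℕ) : degD m (z + z') = degD m z + degD m z' :=
  Finsupp.sum_add_index' (by simp) (by intros; rw [add_smul])

lemma degD_single (m : ℕ) (v : DVar m) (k : ℕ) :
    degD m (Finsupp.single v k) = k • wD m v :=
  Finsupp.sum_single_index (by simp)

lemma degD_apply (m : ℕ) (z : DVar m →₀ ℕ) (n : ℕ) :
    degD m z n = z.sum fun v k => k * wD m v n := by
  classical
  rw [degD, Finsupp.sum_apply]
  rfl

lemma dImage_eq (K : Type*) [Field K] (m : ℕ) (v : DVar m) :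
    dImage K m v = monomial (wD m v) 1 := by
  cases v <;> simp [dImage, wD, X_pow_eq_monomial, X, monomial_mul, monomial_pow, Finsupp.smul_single]

lemma piD_monomial (K : Type*) [Field K] (m : ℕ) (d : DVar m →₀ ℕ) :
    piD K m (monomial d 1) = monomial (degD m d) 1 := by
  induction d using Finsupp.induction with
  | zero => simp [degD]
  | single_add v k d hv hk ih =>
      rw [show monomial (Finsupp.single v k + d) (1 : K) =
        monomial (Finsupp.single v k) 1 * monomial d 1 by rw [monomial_mul, one_mul],
        map_mul, ih, degD_add, degD_single,
        ← X_pow_eq_monomial, map_pow, piD, aeval_X, dImage_eq,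
        monomial_pow, one_pow, monomial_mul, one_mul]


lemma coord_zero {m : ℕ} {z : DVar m →₀ ℕ} {w₀ : ℕ →₀ ℕ} (H : degD m z = w₀)
    {n : ℕ} (hn : w₀ n = 0) {v : DVar m} (hv : wD m v n ≠ 0) : z v = 0 := by
  by_contra h
  have hsupp : v ∈ z.support := Finsupp.mem_support_iff.2 h
  have h1 : z v * wD m v n ≤ degD m z n := by
    rw [degD_apply, Finsupp.sum]
    exact Finset.single_le_sum (f := fun v => z v * wD m v n) (fun _ _ => Nat.zero_le _) hsupp
  rw [H, hn, Nat.le_zero, Nat.mul_eq_zero] at h1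
  tauto

lemma mem_span_binomials {K : Type*} [Field K] {m : ℕ}
    {B : Set (MvPolynomial (DVar m) K)}
    (hbin : ∀ b ∈ B, ∃ d e : DVar m →₀ ℕ, d ≠ e ∧
      b = monomial d (1 : K) - monomial e (1 : K))
    {f : MvPolynomial (DVar m) K} (hf : f ∈ Ideal.span B)
    {a : DVar m →₀ ℕ} (ha : coeff a f ≠ 0) :
    ∃ b ∈ B, ∃ (c d e : DVar m →₀ ℕ), d ≠ e ∧
      b = monomial d (1 : K) - monomial e (1 : K) ∧ (a = c + d ∨ a = c + e) := by
  classical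
  induction hf using Submodule.span_induction generalizing a with
  | mem b hb =>
      obtain ⟨d, e, hde, hbe⟩ := hbin b hb
      have had : a = d ∨ a = e := by
        by_contra hc
        push_neg at hc
        rw [hbe, coeff_sub, coeff_monomial, coeff_monomial,
          if_neg (fun h => hc.1 h.symm), if_neg (fun h => hc.2 h.symm)] at ha
        simp at ha
      exact ⟨b, hb, 0, d, e, hde, hbe, by
        rcases had with h | h
        · exact Or.inl (by rw [h, zero_add])
        · exact Or.inr (by rw [h, zero_add])⟩
  | zero => simp at ha
  | add f g _ _ ihf ihg =>
      rw [coeff_add] at ha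
      rcases (by by_contra hc; push_neg at hc; rw [hc.1, hc.2, add_zero] at ha; exact ha rfl :
        coeff a f ≠ 0 ∨ coeff a g ≠ 0) with h | h
      · exact ihf h
      · exact ihg h
  | smul r f _ ihf =>
      rw [smul_eq_mul, coeff_mul] at ha
      obtain ⟨⟨c₁, d₁⟩, hmem, hne⟩ := Finset.exists_ne_zero_of_sum_ne_zero ha
      have hd₁ : coeff d₁ f ≠ 0 := fun h => hne (by simp [h])
      obtain ⟨b, hb, c, d, e, hde, hbe, hor⟩ := ihf hd₁
      have hsum : c₁ + d₁ = a := Finset.HasAntidiagonal.mem_antidiagonal.1 hmem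
      refine ⟨b, hb, c₁ + c, d, e, hde, hbe, ?_⟩
      rcases hor with h | h
      · exact Or.inl (by rw [← hsum, h, add_assoc])
      · exact Or.inr (by rw [← hsum, h, add_assoc])


lemma fiber1 {m : ℕ} (hm : 2 ≤ m) (i j : Fin (m - 1)) (hij : i < j) (z : DVar m →₀ ℕ)
    (H : degD m z = Finsupp.single (2 * i.val + 3) 2 + Finsupp.single (2 * j.val + 3) 2) :
    z = Finsupp.single (DVar.xJ i) 1 + Finsupp.single (DVar.xJ j) 1 ∨
      z = Finsupp.single (DVar.xP i j hij) 2 := by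
  classical
  have hvij : i.val < j.val := hij
  have hn0 : ∀ n : ℕ, 2 * i.val + 3 ≠ n → 2 * j.val + 3 ≠ n →
      ((Finsupp.single (2 * i.val + 3) 2 + Finsupp.single (2 * j.val + 3) 2 : ℕ →₀ ℕ)) n = 0 := by
    intro n h1 h2
    rw [Finsupp.add_apply, Finsupp.single_eq_of_ne' h1, Finsupp.single_eq_of_ne' h2]
    rfl
  have hz1 : z DVar.x1 = 0 :=
    coord_zero H (hn0 1 (by omega) (by omega)) (by simp [wD])
  have hzn : z DVar.xn = 0 :=
    coord_zero H (hn0 (2 * m) (by omega) (by omega)) (by simp [wD])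
  have hzc : ∀ t, z (DVar.xJc t) = 0 := fun t =>
    coord_zero H (hn0 (2 * t.val + 2) (by omega) (by omega)) (by simp [wD])
  have hzy : ∀ t, z (DVar.y t) = 0 := fun t =>
    coord_zero H (hn0 1 (by omega) (by omega))
      (by simp [wD, Finsupp.single_apply])
  have hzJ : ∀ t, t ≠ i → t ≠ j → z (DVar.xJ t) = 0 := by
    intro t hti htj
    have h1 : t.val ≠ i.val := fun h => hti (Fin.ext h)
    have h2 : t.val ≠ j.val := fun h => htj (Fin.ext h)
    exact coord_zero H (hn0 (2 * t.val + 3) (by omega) (by omega)) (by simp [wD])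
  have hzP : ∀ s t (h : s < t), ¬(s = i ∧ t = j) → z (DVar.xP s t h) = 0 := by
    intro s t h hst
    have hwv : ∀ nn : ℕ, nn = 2 * s.val + 3 ∨ nn = 2 * t.val + 3 →
        wD m (DVar.xP s t h) nn ≠ 0 := by
      intro nn hnn
      simp only [wD, Finsupp.add_apply, Finsupp.single_apply]
      rcases hnn with rfl | rfl <;> split_ifs <;> omega
    have hvst : s.val < t.val := h
    by_cases hsi : s = i
    · subst hsi
      have htj : t ≠ j := fun h' => hst ⟨rfl, h'⟩
      have h2 : t.val ≠ j.val := fun h' => htj (Fin.ext h')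
      exact coord_zero H (hn0 (2 * t.val + 3) (by omega) (by omega))
        (hwv _ (Or.inr rfl))
    · by_cases hsj : s = j
      · subst hsj
        exact coord_zero H (hn0 (2 * t.val + 3) (by omega) (by omega))
          (hwv _ (Or.inr rfl))
      · have h1 : s.val ≠ i.val := fun h' => hsi (Fin.ext h')
        have h2 : s.val ≠ j.val := fun h' => hsj (Fin.ext h')
        exact coord_zero H (hn0 (2 * s.val + 3) (by omega) (by omega))
          (hwv _ (Or.inl rfl))
  -- reconstruct z
  set α := z (DVar.xJ i) with hα
  set β := z (DVar.xJ j) with hβ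
  set γ := z (DVar.xP i j hij) with hγ
  have hzeq : z = Finsupp.single (DVar.xJ i) α + Finsupp.single (DVar.xJ j) β
      + Finsupp.single (DVar.xP i j hij) γ := by
    ext v
    rw [Finsupp.add_apply, Finsupp.add_apply]
    cases v with
    | x1 => simp [Finsupp.single_apply, hz1]
    | xn => simp [Finsupp.single_apply, hzn]
    | xJc t => simp [Finsupp.single_apply, hzc t]
    | y t => simp [Finsupp.single_apply, hzy t]
    | xJ t =>
        rcases eq_or_ne t i with rfl | hti
        · have : t ≠ j := fun h => absurd (h ▸ hij) (lt_irrefl _)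
          simp [Finsupp.single_apply, this.symm, hα]
        · rcases eq_or_ne t j with rfl | htj
          · simp [Finsupp.single_apply, hti.symm, hβ]
          · simp [Finsupp.single_apply, hti.symm, htj.symm, hzJ t hti htj]
    | xP s t h =>
        by_cases hst : s = i ∧ t = j
        · obtain ⟨rfl, rfl⟩ := hst
          simp [Finsupp.single_apply, hγ]
        · have hne : DVar.xP i j hij ≠ DVar.xP s t h := by
            intro h'
            injection h' with h1 h2
            exact hst ⟨h1.symm, h2.symm⟩
          simp [Finsupp.single_apply, hzP s t h hst, hne]
  rw [hzeq, degD_add, degD_add, degD_single, degD_single, degD_single] at H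
  have Hi := congrArg (fun f : ℕ →₀ ℕ => f (2 * i.val + 3)) H
  have Hj := congrArg (fun f : ℕ →₀ ℕ => f (2 * j.val + 3)) H
  simp only [wD, Finsupp.add_apply, Finsupp.smul_apply, Finsupp.single_apply, smul_eq_mul] at Hi Hj
  have hne1 : ¬(2 * j.val + 3 = 2 * i.val + 3) := by omega
  have hne2 : ¬(2 * i.val + 3 = 2 * j.val + 3) := by omega
  simp only [if_true, hne1, hne2, if_false] at Hi Hj
  have hsol : (α = 1 ∧ β = 1 ∧ γ = 0) ∨ (α = 0 ∧ β = 0 ∧ γ = 2) := by omega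
  rcases hsol with ⟨h1, h2, h3⟩ | ⟨h1, h2, h3⟩
  · left; rw [hzeq, h1, h2, h3, Finsupp.single_zero, add_zero]
  · right; rw [hzeq, h1, h2, h3, Finsupp.single_zero, Finsupp.single_zero, zero_add, zero_add]


lemma fiber2 {m : ℕ} (hm : 2 ≤ m) (i : Fin (m - 1)) (z : DVar m →₀ ℕ)
    (H : degD m z = Finsupp.single (2 * i.val + 3) 2 + Finsupp.single 1 2
        + Finsupp.single (2 * m) 2) :
    z = Finsupp.single (DVar.xJ i) 1 + Finsupp.single DVar.x1 1 + Finsupp.single DVar.xn 1 ∨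
      z = Finsupp.single (DVar.y i) 2 := by
  classical
  have hn0 : ∀ n : ℕ, 2 * i.val + 3 ≠ n → 1 ≠ n → 2 * m ≠ n →
      ((Finsupp.single (2 * i.val + 3) 2 + Finsupp.single 1 2
        + Finsupp.single (2 * m) 2 : ℕ →₀ ℕ)) n = 0 := by
    intro n h1 h2 h3
    rw [Finsupp.add_apply, Finsupp.add_apply, Finsupp.single_eq_of_ne' h1,
      Finsupp.single_eq_of_ne' h2, Finsupp.single_eq_of_ne' h3]
    rfl
  have hzc : ∀ t, z (DVar.xJc t) = 0 := fun t =>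
    coord_zero H (hn0 (2 * t.val + 2) (by omega) (by omega)
      (by have := t.isLt; omega)) (by simp [wD])
  have hzJ : ∀ t, t ≠ i → z (DVar.xJ t) = 0 := by
    intro t hti
    have h1 : t.val ≠ i.val := fun h => hti (Fin.ext h)
    exact coord_zero H (hn0 (2 * t.val + 3) (by omega) (by omega) (by omega)) (by simp [wD])
  have hzy : ∀ t, t ≠ i → z (DVar.y t) = 0 := by
    intro t hti
    have h1 : t.val ≠ i.val := fun h => hti (Fin.ext h)
    exact coord_zero H (hn0 (2 * t.val + 3) (by omega) (by omega) (by omega))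
      (by simp [wD, Finsupp.single_apply])
  have hzP : ∀ s t (h : s < t), z (DVar.xP s t h) = 0 := by
    intro s t h
    have hvst : s.val < t.val := h
    have hwv : ∀ nn : ℕ, nn = 2 * s.val + 3 ∨ nn = 2 * t.val + 3 →
        wD m (DVar.xP s t h) nn ≠ 0 := by
      intro nn hnn
      simp only [wD, Finsupp.add_apply, Finsupp.single_apply]
      rcases hnn with rfl | rfl <;> split_ifs <;> omega
    by_cases hsi : s = i
    · subst hsi
      have h2 : t.val ≠ s.val := by omega
      exact coord_zero H (hn0 (2 * t.val + 3) (by omega) (by omega) (by omega))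
        (hwv _ (Or.inr rfl))
    · have h1 : s.val ≠ i.val := fun h' => hsi (Fin.ext h')
      exact coord_zero H (hn0 (2 * s.val + 3) (by omega) (by omega) (by omega))
        (hwv _ (Or.inl rfl))
  set a := z DVar.x1 with ha
  set b := z DVar.xn with hb
  set c := z (DVar.xJ i) with hc
  set e := z (DVar.y i) with he
  have hzeq : z = Finsupp.single (DVar.xJ i) c + Finsupp.single DVar.x1 a
      + Finsupp.single DVar.xn b + Finsupp.single (DVar.y i) e := by
    ext v
    rw [Finsupp.add_apply, Finsupp.add_apply, Finsupp.add_apply]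
    cases v with
    | x1 => simp [Finsupp.single_apply, ha]
    | xn => simp [Finsupp.single_apply, hb]
    | xJc t => simp [Finsupp.single_apply, hzc t]
    | xP s t h => simp [Finsupp.single_apply, hzP s t h]
    | xJ t =>
        rcases eq_or_ne t i with rfl | hti
        · simp [Finsupp.single_apply, hc]
        · simp [Finsupp.single_apply, hti.symm, hzJ t hti]
    | y t =>
        rcases eq_or_ne t i with rfl | hti
        · simp [Finsupp.single_apply, he]
        · simp [Finsupp.single_apply, hti.symm, hzy t hti]
  rw [hzeq, degD_add, degD_add, degD_add, degD_single, degD_single, degD_single,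
    degD_single] at H
  have H1 := congrArg (fun f : ℕ →₀ ℕ => f 1) H
  have H2 := congrArg (fun f : ℕ →₀ ℕ => f (2 * m)) H
  have H3 := congrArg (fun f : ℕ →₀ ℕ => f (2 * i.val + 3)) H
  simp only [wD, Finsupp.add_apply, Finsupp.smul_apply, Finsupp.single_apply,
    smul_eq_mul] at H1 H2 H3
  have e1 : ¬(2 * i.val + 3 = 1) := by omega
  have e2 : ¬(2 * m = 1) := by omega
  have e3 : ¬(1 = 2 * m) := by omega
  have e4 : ¬(2 * i.val + 3 = 2 * m) := by omega
  have e5 : ¬(1 = 2 * i.val + 3) := by omega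
  have e6 : ¬(2 * m = 2 * i.val + 3) := by omega
  simp only [if_true, e1, e2, e3, e4, e5, e6, if_false] at H1 H2 H3
  have hsol : (c = 1 ∧ a = 1 ∧ b = 1 ∧ e = 0) ∨ (c = 0 ∧ a = 0 ∧ b = 0 ∧ e = 2) := by
    omega
  rcases hsol with ⟨h1, h2, h3, h4⟩ | ⟨h1, h2, h3, h4⟩
  · left
    rw [hzeq, h1, h2, h3, h4, Finsupp.single_zero, add_zero]
  · right
    rw [hzeq, h1, h2, h3, h4, Finsupp.single_zero, Finsupp.single_zero, Finsupp.single_zero,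
      zero_add, zero_add, zero_add]


lemma monomial_one_inj {K σ : Type*} [Field K] {s t : σ →₀ ℕ}
    (h : monomial s (1 : K) = monomial t 1) : s = t := by
  classical
  by_contra hne
  have := congrArg (coeff s) h
  rw [coeff_monomial, coeff_monomial, if_pos rfl, if_neg (fun h' => hne h'.symm)] at this
  exact one_ne_zero this

lemma binomial_indispensable {K : Type*} [Field K] {m : ℕ}
    {B : Set (MvPolynomial (DVar m) K)}
    (hbin : ∀ b ∈ B, ∃ d e : DVar m →₀ ℕ, d ≠ e ∧
      b = monomial d (1 : K) - monomial e (1 : K))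
    (hspan : Ideal.span B = RingHom.ker (piD K m))
    (a p : DVar m →₀ ℕ) (hap : a ≠ p)
    (hdeg : degD m a = degD m p)
    (hfiber : ∀ z : DVar m →₀ ℕ, degD m z = degD m a → z = a ∨ z = p)
    (hdisj : ∀ v, a v = 0 ∨ p v = 0) :
    (monomial a (1 : K) - monomial p 1) ∈ B ∨
      (monomial p (1 : K) - monomial a 1) ∈ B := by
  classical
  set f : MvPolynomial (DVar m) K := monomial a 1 - monomial p 1 with hf
  have hfker : f ∈ RingHom.ker (piD K m) := by
    rw [RingHom.mem_ker, hf, map_sub, piD_monomial, piD_monomial, hdeg, sub_self]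
  have hfspan : f ∈ Ideal.span B := by rw [hspan]; exact hfker
  have hcoeff : coeff a f ≠ 0 := by
    rw [hf, coeff_sub, coeff_monomial, coeff_monomial, if_pos rfl,
      if_neg (fun h' => hap h'.symm), sub_zero]
    exact one_ne_zero (α := K)
  obtain ⟨b, hb, c, d, e, hde, hbe, hor⟩ := mem_span_binomials hbin hfspan hcoeff
  have hbker : piD K m b = 0 := by
    have : b ∈ RingHom.ker (piD K m) := hspan ▸ Ideal.subset_span hb
    rwa [RingHom.mem_ker] at this
  have hdegde : degD m d = degD m e := by
    rw [hbe, map_sub, piD_monomial, piD_monomial, sub_eq_zero] at hbker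
    exact monomial_one_inj hbker
  rcases hor with hacd | hace
  · -- a = c + d, show c + e = p, c = 0, b = monomial a 1 - monomial p 1
    have hce : c + e = p := by
      have h1 : degD m (c + e) = degD m a := by
        rw [degD_add, ← hdegde, ← degD_add, ← hacd]
      rcases hfiber _ h1 with h | h
      · exfalso
        apply hde
        exact (add_left_cancel (h.trans hacd)).symm
      · exact h
    have hc0 : c = 0 := by
      ext v
      have l1 : c v + d v = a v := by rw [← Finsupp.add_apply, ← hacd]
      have l2 : c v + e v = p v := by rw [← Finsupp.add_apply, hce]
      simp only [Finsupp.coe_zero, Pi.zero_apply]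
      rcases hdisj v with h | h <;> omega
    left
    rw [hc0, zero_add] at hacd hce
    have hfb : f = b := by rw [hbe, hf, hacd, ← hce]
    exact hfb ▸ hb
  · have hcd : c + d = p := by
      have h1 : degD m (c + d) = degD m a := by
        rw [degD_add, hdegde, ← degD_add, ← hace]
      rcases hfiber _ h1 with h | h
      · exfalso
        apply hde
        exact add_left_cancel (h.trans hace)
      · exact h
    have hc0 : c = 0 := by
      ext v
      have l1 : c v + e v = a v := by rw [← Finsupp.add_apply, ← hace]
      have l2 : c v + d v = p v := by rw [← Finsupp.add_apply, hcd]
      simp only [Finsupp.coe_zero, Pi.zero_apply]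
      rcases hdisj v with h | h <;> omega
    right
    rw [hc0, zero_add] at hace hcd
    have hfb : monomial p (1 : K) - monomial a 1 = b := by rw [hbe, ← hcd, hace]
    exact hfb ▸ hb

end DAux

/-- the binomials `x_i x_j − x_{i,j}²` (`i < j` in `J`) and
`x_i x_1 x_n − y_i²` (`i ∈ J`) are indispensable binomials of `I_{D_{2m}}`: every set of
binomials generating the toric ideal contains each of them or its negative. -/
theorem GD_indispensable (K : Type*) [Field K] (m : ℕ) (hm : 2 ≤ m)
    (B : Set (MvPolynomial (DVar m) K))
    (hbin : ∀ b ∈ B, ∃ d e : DVar m →₀ ℕ, d ≠ e ∧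
      b = monomial d (1 : K) - monomial e (1 : K))
    (hspan : Ideal.span B = RingHom.ker (piD K m)) :
    (∀ (i j : Fin (m - 1)) (hij : i < j),
        X (DVar.xJ i) * X (DVar.xJ j) - X (DVar.xP i j hij) ^ 2 ∈ B ∨
        X (DVar.xP i j hij) ^ 2 - X (DVar.xJ i) * X (DVar.xJ j) ∈ B) ∧
    (∀ i : Fin (m - 1),
        X (DVar.xJ i) * X DVar.x1 * X DVar.xn - X (DVar.y i) ^ 2 ∈ B ∨
        X (DVar.y i) ^ 2 - X (DVar.xJ i) * X DVar.x1 * X DVar.xn ∈ B) := by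
    classical
  have hX : ∀ v : DVar m, (X v : MvPolynomial (DVar m) K)
      = monomial (Finsupp.single v 1) 1 := fun v => by
    rw [← X_pow_eq_monomial, pow_one]
  constructor
  · intro i j hij
    have haw : DAux.degD m (Finsupp.single (DVar.xJ i) 1 + Finsupp.single (DVar.xJ j) 1)
        = Finsupp.single (2 * i.val + 3) 2 + Finsupp.single (2 * j.val + 3) 2 := by
      simp [DAux.degD_add, DAux.degD_single, DAux.wD]
    have hpw : DAux.degD m (Finsupp.single (DVar.xP i j hij) 2)
        = Finsupp.single (2 * i.val + 3) 2 + Finsupp.single (2 * j.val + 3) 2 := by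
      simp [DAux.degD_single, DAux.wD, smul_add, Finsupp.smul_single]
    have key := DAux.binomial_indispensable hbin hspan
      (Finsupp.single (DVar.xJ i) 1 + Finsupp.single (DVar.xJ j) 1)
      (Finsupp.single (DVar.xP i j hij) 2)
      (by
        intro h
        have := congrArg (fun f : DVar m →₀ ℕ => f (DVar.xJ i)) h
        simp [Finsupp.single_apply] at this)
      (haw.trans hpw.symm)
      (fun z hz => DAux.fiber1 hm i j hij z (hz.trans haw))
      (by
        intro v
        cases v with
        | xJ t => exact Or.inr (by simp [Finsupp.single_apply])
        | x1 => exact Or.inl (by simp [Finsupp.single_apply])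
        | xn => exact Or.inl (by simp [Finsupp.single_apply])
        | xJc t => exact Or.inl (by simp [Finsupp.single_apply])
        | xP s t h => exact Or.inl (by simp [Finsupp.single_apply])
        | y t => exact Or.inl (by simp [Finsupp.single_apply]))
    have hXa : (X (DVar.xJ i) * X (DVar.xJ j) : MvPolynomial (DVar m) K)
        = monomial (Finsupp.single (DVar.xJ i) 1 + Finsupp.single (DVar.xJ j) 1) 1 := by
      rw [hX, hX, monomial_mul, one_mul]
    have hXp : (X (DVar.xP i j hij) ^ 2 : MvPolynomial (DVar m) K)
        = monomial (Finsupp.single (DVar.xP i j hij) 2) 1 := X_pow_eq_monomial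
    rcases key with h | h
    · left; rw [hXa, hXp]; exact h
    · right; rw [hXa, hXp]; exact h
  · intro i
    have haw : DAux.degD m (Finsupp.single (DVar.xJ i) 1 + Finsupp.single DVar.x1 1
        + Finsupp.single DVar.xn 1)
        = Finsupp.single (2 * i.val + 3) 2 + Finsupp.single 1 2
          + Finsupp.single (2 * m) 2 := by
      simp [DAux.degD_add, DAux.degD_single, DAux.wD]
    have hpw : DAux.degD m (Finsupp.single (DVar.y i) 2)
        = Finsupp.single (2 * i.val + 3) 2 + Finsupp.single 1 2
          + Finsupp.single (2 * m) 2 := by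
      simp [DAux.degD_single, DAux.wD, smul_add, Finsupp.smul_single]
    have key := DAux.binomial_indispensable hbin hspan
      (Finsupp.single (DVar.xJ i) 1 + Finsupp.single DVar.x1 1 + Finsupp.single DVar.xn 1)
      (Finsupp.single (DVar.y i) 2)
      (by
        intro h
        have := congrArg (fun f : DVar m →₀ ℕ => f DVar.x1) h
        simp [Finsupp.single_apply] at this)
      (haw.trans hpw.symm)
      (fun z hz => DAux.fiber2 hm i z (hz.trans haw))
      (by
        intro v
        cases v with
        | y t => exact Or.inl (by simp [Finsupp.single_apply])
        | x1 => exact Or.inr (by simp [Finsupp.single_apply])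
        | xn => exact Or.inr (by simp [Finsupp.single_apply])
        | xJc t => exact Or.inr (by simp [Finsupp.single_apply])
        | xP s t h => exact Or.inr (by simp [Finsupp.single_apply])
        | xJ t => exact Or.inr (by simp [Finsupp.single_apply]))
    have hXa : (X (DVar.xJ i) * X DVar.x1 * X DVar.xn : MvPolynomial (DVar m) K)
        = monomial (Finsupp.single (DVar.xJ i) 1 + Finsupp.single DVar.x1 1
            + Finsupp.single DVar.xn 1) 1 := by
      rw [hX, hX, hX, monomial_mul, monomial_mul, one_mul, one_mul]
    have hXp : (X (DVar.y i) ^ 2 : MvPolynomial (DVar m) K)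
        = monomial (Finsupp.single (DVar.y i) 2) 1 := X_pow_eq_monomial
    rcases key with h | h
    · left; rw [hXa, hXp]; exact h
    · right; rw [hXa, hXp]; exact h
end
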